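/- arXiv:2306.16720 — 4 statements merged into one kernel-verified Lean document; each statement's English description precedes it below -/
import Mathlib

section
/- Let n ≥ 1, t ∈ [0,1] and let A be any n×n complex matrix. Then there exists ε > 0 such that for all complex z with |z| < ε, the series Σ_{k≥1} Tr[P_k^{(t)}(A)] z^k/k converges and det(I_n + t z² − z A) = exp( − Σ_{k≥1} Tr[P_k^{(t)}(A)] z^k / k ), where P_k^{(t)}(A) denotes the evaluation of the polynomial P_k^{(t)} at the matrix A. -/
open Polynomial Matrix Module LinearMap Set

/-- The modified Chebyshev polynomials in `ℂ[X]` for a real parameter `t`: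
`P₀ = 2`, `P₁ = X`, `P_{k+2} = X·P_{k+1} − t·P_k`. -/
noncomputable def modCheb (t : ℝ) : ℕ → Polynomial ℂ
  | 0 => 2
  | 1 => Polynomial.X
  | (k + 2) => Polynomial.X * modCheb t (k + 1) - Polynomial.C (t : ℂ) * modCheb t k



-- det of blockDiagonal'
lemma my_det_blockDiagonal' {R : Type*} [CommRing R] {m : ℕ} {κ : Fin m → Type*}
    [∀ i, Fintype (κ i)] [∀ i, DecidableEq (κ i)] (d : ∀ i, Matrix (κ i) (κ i) R) :
    (Matrix.blockDiagonal' d).det = ∏ i, (d i).det := by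
  classical
  rw [(Matrix.blockTriangular_blockDiagonal' d).det]
  have hblock : ∀ k : Fin m,
      ((Matrix.blockDiagonal' d).toSquareBlock Sigma.fst k).det = (d k).det := by
    intro k
    let e : κ k ≃ {a : Σ i, κ i // a.1 = k} :=
      { toFun := fun x => ⟨⟨k, x⟩, rfl⟩
        invFun := fun a => (congrArg κ a.2).mp a.1.2
        left_inv := fun x => rfl
        right_inv := by rintro ⟨⟨i, x⟩, rfl⟩; rfl }
    rw [← Matrix.det_submatrix_equiv_self e]
    congr 1
    ext x y
    simp [e, Matrix.toSquareBlock_def]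
  rw [show ∀ (s : Finset (Fin m)), ∏ a ∈ s, ((Matrix.blockDiagonal' d).toSquareBlock Sigma.fst a).det = ∏ a ∈ s, (d a).det from fun s => Finset.prod_congr rfl fun k _ => hblock k]
  refine Finset.prod_subset (Finset.subset_univ _) ?_
  intro i _ hi
  have : IsEmpty (κ i) := by
    by_contra h
    rw [not_isEmpty_iff] at h
    exact hi (Finset.mem_image.mpr ⟨⟨i, h.some⟩, Finset.mem_univ _, rfl⟩)
  exact Matrix.det_isEmpty



section restr
variable {V : Type*} [AddCommGroup V] [Module ℂ V]

lemma my_restrict_pow (f : Module.End ℂ V) {W : Submodule ℂ V} (hf : MapsTo f W W)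
    (k : ℕ) (x : W) : (((f.restrict hf) ^ k) x : V) = (f ^ k) (x : V) := by
  induction k with
  | zero => simp
  | succ k ih =>
    rw [pow_succ', pow_succ', Module.End.mul_apply, Module.End.mul_apply]
    exact congrArg f ih

lemma my_restrict_aeval (f : Module.End ℂ V) {W : Submodule ℂ V} (hf : MapsTo f W W)
    (p : ℂ[X]) (h2 : MapsTo (aeval f p) W W) :
    (aeval f p).restrict h2 = aeval (f.restrict hf) p := by
  have key : ∀ q : ℂ[X], ∀ x : W, ((aeval (f.restrict hf) q) x : V) = (aeval f q) (x : V) := by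
    intro q
    induction q using Polynomial.induction_on' with
    | add p q hp hq => intro x; simp [map_add, hp, hq]
    | monomial n a =>
      intro x
      simp only [aeval_monomial, Module.End.mul_apply, Algebra.algebraMap_eq_smul_one,
        LinearMap.smul_apply, Module.End.one_apply, Submodule.coe_smul]
      rw [my_restrict_pow f hf n x]
  ext x
  exact (key p x).symm

lemma my_restrict_smul (z : ℂ) (f : Module.End ℂ V) {W : Submodule ℂ V} (hf : MapsTo f W W)
    (h2 : MapsTo (z • f) W W) :
    (z • f).restrict h2 = z • f.restrict hf := by
  ext x
  simp [LinearMap.restrict_apply, LinearMap.coe_restrict_apply]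
  rfl

end restr

section nil
variable {W : Type*} [AddCommGroup W] [Module ℂ W] [FiniteDimensional ℂ W]

lemma my_trace_aeval (g : Module.End ℂ W) (μ : ℂ)
    (h : IsNilpotent (g - algebraMap ℂ (Module.End ℂ W) μ)) (p : ℂ[X]) :
    LinearMap.trace ℂ W (aeval g p) = (finrank ℂ W : ℂ) * p.eval μ := by
  set N := g - algebraMap ℂ (Module.End ℂ W) μ with hN
  have hg : g = N + algebraMap ℂ (Module.End ℂ W) μ := by rw [hN, sub_add_cancel]
  set q : ℂ[X] := p.comp (X + C μ) with hq
  have h1 : aeval g p = aeval N q := by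
    rw [hq, aeval_comp, map_add, aeval_X, aeval_C, ← hg]
  have h2 : aeval N q = N * aeval N q.divX + algebraMap ℂ (Module.End ℂ W) (q.coeff 0) := by
    conv_lhs => rw [← X_mul_divX_add q]
    rw [map_add, _root_.map_mul, aeval_X, aeval_C]
  have hcomm : Commute N (aeval N q.divX) := by
    have := (Commute.all (X : ℂ[X]) q.divX).map (aeval N)
    rwa [aeval_X] at this
  have hnil : IsNilpotent (N * aeval N q.divX) := hcomm.isNilpotent_mul_right h
  have htr0 : LinearMap.trace ℂ W (N * aeval N q.divX) = 0 :=
    IsNilpotent.eq_zero (LinearMap.isNilpotent_trace_of_isNilpotent hnil)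
  have hq0 : q.coeff 0 = p.eval μ := by
    rw [coeff_zero_eq_eval_zero, hq, eval_comp]; simp
  rw [h1, h2, map_add, htr0, zero_add, Algebra.algebraMap_eq_smul_one, _root_.map_smul,
    LinearMap.trace_one, hq0, smul_eq_mul, mul_comm]

lemma my_eval_charpoly {ι : Type*} [Fintype ι] [DecidableEq ι] (M : Matrix ι ι ℂ) (x : ℂ) :
    M.charpoly.eval x = (x • (1 : Matrix ι ι ℂ) - M).det := by
  have hscal : (Matrix.scalar ι) x = x • (1 : Matrix ι ι ℂ) := by
    ext i j
    rcases eq_or_ne i j with rfl | hij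
    · simp [Matrix.one_apply]
    · simp [Matrix.diagonal_apply_ne _ hij, Matrix.one_apply_ne hij]
  rw [Matrix.charpoly, _root_.eval_det, matPolyEquiv_charmatrix, eval_sub, eval_X, eval_C, hscal]

lemma my_det_nilpotent (g : Module.End ℂ W) (μ : ℂ)
    (h : IsNilpotent (g - algebraMap ℂ (Module.End ℂ W) μ)) (c z : ℂ) :
    LinearMap.det (c • (1 : Module.End ℂ W) - z • g) = (c - z * μ) ^ finrank ℂ W := by
  set N := g - algebraMap ℂ (Module.End ℂ W) μ with hN
  have hzN : IsNilpotent (z • N) := by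
    obtain ⟨k, hk⟩ := h
    exact ⟨k, by rw [_root_.smul_pow, hk, smul_zero]⟩
  have key : c • (1 : Module.End ℂ W) - z • g = (c - z * μ) • 1 - z • N := by
    rw [hN, Algebra.algebraMap_eq_smul_one, smul_sub, sub_smul, smul_smul]
    abel
  rw [key]
  let b := Module.finBasis ℂ W
  rw [← LinearMap.det_toMatrix b, map_sub, _root_.map_smul, LinearMap.toMatrix_one]
  rw [← my_eval_charpoly, LinearMap.charpoly_toMatrix, IsNilpotent.charpoly_eq_X_pow_finrank hzN]
  simp

end nil

lemma exists_spectrum (n : ℕ) (A : Matrix (Fin n) (Fin n) ℂ) :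
    ∃ σ : Multiset ℂ, (∀ p : ℂ[X],
        Matrix.trace (Polynomial.aeval A p) = (σ.map fun μ => Polynomial.eval μ p).sum) ∧
      (∀ c z : ℂ, (c • (1 : Matrix (Fin n) (Fin n) ℂ) - z • A).det
          = (σ.map fun μ => c - z * μ).prod) := by
  classical
  set V := (Fin n → ℂ) with hV
  set f : Module.End ℂ V := Matrix.toLinAlgEquiv' A with hfdef
  have hN : {μ : ℂ | f.maxGenEigenspace μ ≠ ⊥}.Finite :=
    WellFoundedGT.finite_ne_bot_of_iSupIndep f.independent_maxGenEigenspace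
  set s : Finset ℂ := hN.toFinset with hs
  set m := s.card with hm
  set ev : Fin m → ℂ := fun i => (s.equivFin.symm i : ℂ) with hev
  have hevinj : Function.Injective ev :=
    fun i j h => s.equivFin.symm.injective (Subtype.ext h)
  set N : Fin m → Submodule ℂ V := fun i => f.maxGenEigenspace (ev i) with hNdef
  have hInd : iSupIndep N := f.independent_maxGenEigenspace.comp hevinj
  have hTop : ⨆ i, N i = ⊤ := by
    rw [← Module.End.iSup_maxGenEigenspace_eq_top f]
    apply le_antisymm (iSup_le fun i => le_iSup _ (ev i))
    refine iSup_le fun μ => ?_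
    by_cases hμ : f.maxGenEigenspace μ = ⊥
    · simp [hμ]
    · have hμs : μ ∈ s := by simpa [hs] using hμ
      have hevμ : ev (s.equivFin ⟨μ, hμs⟩) = μ := by simp [hev]
      calc f.maxGenEigenspace μ = N (s.equivFin ⟨μ, hμs⟩) := by rw [hNdef]; simp [hevμ]
        _ ≤ ⨆ i, N i := le_iSup N _
  have hds : DirectSum.IsInternal N :=
    DirectSum.isInternal_submodule_of_iSupIndep_of_iSup_eq_top hInd hTop
  have hmapf : ∀ i, MapsTo f (N i) (N i) := fun i =>
    f.mapsTo_maxGenEigenspace_of_comm rfl (ev i)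
  have hnil : ∀ i, IsNilpotent
      (f.restrict (hmapf i) - algebraMap ℂ (Module.End ℂ (N i)) (ev i)) := by
    intro i
    have h1 := f.isNilpotent_restrict_maxGenEigenspace_sub_algebraMap (ev i)
    have h2 : f.restrict (hmapf i) - algebraMap ℂ (Module.End ℂ (N i)) (ev i)
        = (f - algebraMap ℂ (Module.End ℂ V) (ev i)).restrict
          (Module.End.mapsTo_maxGenEigenspace_of_comm
            (Algebra.mul_sub_algebraMap_commutes f (ev i)) (ev i)) := by
      ext x
      simp [LinearMap.restrict_apply, LinearMap.coe_restrict_apply, LinearMap.sub_apply, Algebra.algebraMap_eq_smul_one]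
      rfl
    rw [h2]
    exact h1
  refine ⟨Finset.univ.val.bind fun i : Fin m =>
      Multiset.replicate (finrank ℂ (N i)) (ev i), ?_, ?_⟩
  · intro p
    have hc : Commute f (aeval f p) := by
      have := (Commute.all (X : ℂ[X]) p).map (aeval f)
      rwa [aeval_X] at this
    have hmap : ∀ i, MapsTo (aeval f p) (N i) (N i) := fun i =>
      f.mapsTo_maxGenEigenspace_of_comm hc (ev i)
    have hb : Matrix.trace (Polynomial.aeval A p) = LinearMap.trace ℂ V (aeval f p) := by
      have he : aeval f p = Matrix.toLinAlgEquiv' (aeval A p) := by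
        rw [hfdef]; exact aeval_algHom_apply (Matrix.toLinAlgEquiv' (R := ℂ) (n := Fin n)) A p
      rw [he, LinearMap.trace_eq_matrix_trace ℂ (Pi.basisFun ℂ (Fin n)),
        LinearMap.toMatrix_eq_toMatrix']
      congr 1
      exact (LinearMap.toMatrixAlgEquiv'_toLinAlgEquiv' (aeval A p)).symm
    rw [hb, LinearMap.trace_eq_sum_trace_restrict hds hmap]
    have hterm : ∀ i, LinearMap.trace ℂ (N i) ((aeval f p).restrict (hmap i))
        = (finrank ℂ (N i) : ℂ) * p.eval (ev i) := by
      intro i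
      rw [my_restrict_aeval f (hmapf i) p (hmap i)]
      exact my_trace_aeval _ _ (hnil i) p
    rw [Finset.sum_congr rfl fun i _ => hterm i]
    simp only [Multiset.map_bind, Multiset.map_replicate, Multiset.sum_bind,
      Multiset.sum_replicate, nsmul_eq_mul]
    rfl
  · intro c z
    have hcomm : Commute f (c • (1 : Module.End ℂ V) - z • f) :=
      (((Commute.one_right f).smul_right c).sub_right ((Commute.refl f).smul_right z))
    have hmap : ∀ i, MapsTo (c • (1 : Module.End ℂ V) - z • f) (N i) (N i) := fun i =>
      f.mapsTo_maxGenEigenspace_of_comm hcomm (ev i)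
    have hb : (c • (1 : Matrix (Fin n) (Fin n) ℂ) - z • A).det
        = LinearMap.det (c • (1 : Module.End ℂ V) - z • f) := by
      have he : c • (1 : Module.End ℂ V) - z • f
          = Matrix.toLin' (c • (1 : Matrix (Fin n) (Fin n) ℂ) - z • A) := by
        have : (Matrix.toLinAlgEquiv' (c • (1 : Matrix (Fin n) (Fin n) ℂ) - z • A))
            = Matrix.toLin' (c • (1 : Matrix (Fin n) (Fin n) ℂ) - z • A) := rfl
        rw [← this, map_sub, _root_.map_smul, _root_.map_smul, _root_.map_one]
      rw [he, LinearMap.det_toLin']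
    rw [hb]
    let b : ∀ i, Basis (Fin (finrank ℂ (N i))) ℂ (N i) := fun i => Module.finBasis ℂ (N i)
    rw [← LinearMap.det_toMatrix (hds.collectedBasis b),
      LinearMap.toMatrix_directSum_collectedBasis_eq_blockDiagonal' hds hds b b hmap,
      my_det_blockDiagonal']
    have hterm : ∀ i, ((LinearMap.toMatrix (b i) (b i))
        ((c • (1 : Module.End ℂ V) - z • f).restrict (hmap i))).det
        = (c - z * ev i) ^ finrank ℂ (N i) := by
      intro i
      rw [LinearMap.det_toMatrix]
      have h2 : (c • (1 : Module.End ℂ V) - z • f).restrict (hmap i)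
          = c • (1 : Module.End ℂ (N i)) - z • (f.restrict (hmapf i)) := by
        ext x
        simp [LinearMap.restrict_apply, LinearMap.coe_restrict_apply]
        rfl
      rw [h2]
      exact my_det_nilpotent _ _ (hnil i) c z
    rw [Finset.prod_congr rfl fun i _ => hterm i]
    simp only [Multiset.map_bind, Multiset.map_replicate, Multiset.prod_bind,
      Multiset.prod_replicate]
    rfl

lemma modCheb_eval (t : ℝ) (α β : ℂ) (h : α * β = (t : ℂ)) (k : ℕ) :
    (modCheb t k).eval (α + β) = α ^ k + β ^ k := by
  induction k using Nat.strong_induction_on with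
  | _ k ih =>
    match k with
    | 0 => norm_num [modCheb]
    | 1 => simp [modCheb]
    | (k + 2) =>
      have h1 := ih (k + 1) (by omega)
      have h0 := ih k (by omega)
      show ((X * modCheb t (k + 1) - C (t : ℂ) * modCheb t k).eval (α + β)) = _
      rw [eval_sub, eval_mul, eval_mul, eval_X, eval_C, h1, h0, ← h]
      ring

lemma scalar_hasSum (t : ℝ) (ht0 : 0 ≤ t) (ht1 : t ≤ 1) (μ z : ℂ)
    (hz : ‖z‖ * (‖μ‖ + 2) < 1) :
    ∃ S : ℂ, HasSum (fun k : ℕ =>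
        (modCheb t (k + 1)).eval μ * z ^ (k + 1) / ((k : ℂ) + 1)) S ∧
      Complex.exp (-S) = 1 + (t : ℂ) * z ^ 2 - z * μ := by
  obtain ⟨sq, hsq⟩ := IsAlgClosed.exists_pow_nat_eq (μ ^ 2 - 4 * (t : ℂ)) (n := 2) two_pos
  set α : ℂ := (μ + sq) / 2 with hα
  set β : ℂ := (μ - sq) / 2 with hβ
  have hsum : α + β = μ := by rw [hα, hβ]; ring
  have hprod : α * β = (t : ℂ) := by
    rw [hα, hβ]
    have : sq ^ 2 = μ ^ 2 - 4 * (t : ℂ) := hsq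
    linear_combination (-1/4 : ℂ) * this
  have habs_sq : ‖sq‖ ≤ ‖μ‖ + 2 := by
    have h1 : ‖sq‖ ^ 2 = ‖μ ^ 2 - 4 * (t : ℂ)‖ := by
      rw [← norm_pow, hsq]
    have h2 : ‖μ ^ 2 - 4 * (t : ℂ)‖ ≤ ‖μ‖ ^ 2 + 4 := by
      refine le_trans (norm_sub_le _ _) ?_
      have : ‖4 * (t : ℂ)‖ = 4 * t := by
        rw [norm_mul, Complex.norm_real, Real.norm_of_nonneg ht0]
        norm_num
      rw [norm_pow, this]
      nlinarith
    nlinarith [norm_nonneg sq, norm_nonneg μ]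
  have habsα : ‖α‖ ≤ ‖μ‖ + 1 := by
    rw [hα, norm_div]
    have := norm_add_le μ sq
    simp only [Complex.norm_two]
    linarith
  have habsβ : ‖β‖ ≤ ‖μ‖ + 1 := by
    rw [hβ, norm_div]
    have := norm_sub_le μ sq
    simp only [Complex.norm_two]
    linarith
  have hz0 : (0:ℝ) ≤ ‖z‖ := norm_nonneg z
  have hαz : ‖α * z‖ < 1 := by
    rw [norm_mul]
    nlinarith [norm_nonneg μ]
  have hβz : ‖β * z‖ < 1 := by
    rw [norm_mul]
    nlinarith [norm_nonneg μ]
  have hA := Complex.hasSum_taylorSeries_neg_log hαz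
  have hB := Complex.hasSum_taylorSeries_neg_log hβz
  have hA1 : HasSum (fun k : ℕ => (α * z) ^ (k + 1) / ((k : ℂ) + 1))
      (-Complex.log (1 - α * z)) := by
    have := (hasSum_nat_add_iff (f := fun n : ℕ => (α * z) ^ n / (n : ℂ)) 1).mpr
      (by simpa using hA)
    simpa [Nat.cast_add] using this
  have hB1 : HasSum (fun k : ℕ => (β * z) ^ (k + 1) / ((k : ℂ) + 1))
      (-Complex.log (1 - β * z)) := by
    have := (hasSum_nat_add_iff (f := fun n : ℕ => (β * z) ^ n / (n : ℂ)) 1).mpr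
      (by simpa using hB)
    simpa [Nat.cast_add] using this
  refine ⟨-Complex.log (1 - α * z) + -Complex.log (1 - β * z), ?_, ?_⟩
  · have := hA1.add hB1
    have hfun : (fun k : ℕ => (modCheb t (k + 1)).eval μ * z ^ (k + 1) / ((k : ℂ) + 1))
        = fun k : ℕ => (α * z) ^ (k + 1) / ((k : ℂ) + 1) + (β * z) ^ (k + 1) / ((k : ℂ) + 1) := by
      funext k
      rw [← hsum, modCheb_eval t α β hprod (k + 1)]
      rw [mul_pow, mul_pow]
      ring
    rw [hfun]
    exact this
  · have h1 : (1 : ℂ) - α * z ≠ 0 := by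
      intro h
      rw [sub_eq_zero] at h
      rw [← h] at hαz
      simp at hαz
    have h2 : (1 : ℂ) - β * z ≠ 0 := by
      intro h
      rw [sub_eq_zero] at h
      rw [← h] at hβz
      simp at hβz
    rw [neg_add, neg_neg, neg_neg, Complex.exp_add, Complex.exp_log h1, Complex.exp_log h2]
    rw [← hsum, ← hprod]
    ring

lemma multiset_hasSum (t : ℝ) (ht0 : 0 ≤ t) (ht1 : t ≤ 1) (z : ℂ) (σ : Multiset ℂ)
    (hσ : ∀ μ ∈ σ, ‖z‖ * (‖μ‖ + 2) < 1) :
    ∃ S : ℂ, HasSum (fun k : ℕ =>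
        (σ.map fun μ => (modCheb t (k + 1)).eval μ).sum * z ^ (k + 1) / ((k : ℂ) + 1)) S ∧
      Complex.exp (-S) = (σ.map fun μ => 1 + (t : ℂ) * z ^ 2 - z * μ).prod := by
  induction σ using Multiset.induction_on with
  | empty =>
    refine ⟨0, ?_, by simp⟩
    simpa using hasSum_zero
  | cons a σ ih =>
    obtain ⟨Sa, hSa, hea⟩ := scalar_hasSum t ht0 ht1 a z (hσ a (Multiset.mem_cons_self a σ))
    obtain ⟨Ss, hSs, hes⟩ := ih fun μ hμ => hσ μ (Multiset.mem_cons_of_mem hμ)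
    refine ⟨Sa + Ss, ?_, ?_⟩
    · have := hSa.add hSs
      have hfun : (fun k : ℕ =>
          ((a ::ₘ σ).map fun μ => (modCheb t (k + 1)).eval μ).sum * z ^ (k + 1) / ((k : ℂ) + 1))
          = fun k : ℕ => (modCheb t (k + 1)).eval a * z ^ (k + 1) / ((k : ℂ) + 1)
            + (σ.map fun μ => (modCheb t (k + 1)).eval μ).sum * z ^ (k + 1) / ((k : ℂ) + 1) := by
        funext k
        rw [Multiset.map_cons, Multiset.sum_cons]
        ring
      rw [hfun]
      exact this
    · rw [neg_add, Complex.exp_add, hea, hes, Multiset.map_cons, Multiset.prod_cons]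

/-- For `n ≥ 1`, `t ∈ [0,1]` and any `n×n` complex matrix `A`, there is `ε > 0` such that
for `|z| < ε` the series `Σ_{k≥1} Tr[P_k^{(t)}(A)] z^k/k` converges and
`det(I + t z² − z A) = exp(−Σ_{k≥1} Tr[P_k^{(t)}(A)] z^k/k)`. -/
theorem stmt_5 (n : ℕ) (hn : 1 ≤ n) (t : ℝ) (ht0 : 0 ≤ t) (ht1 : t ≤ 1)
    (A : Matrix (Fin n) (Fin n) ℂ) :
    ∃ ε > (0 : ℝ), ∀ z : ℂ, ‖z‖ < ε →
      Summable (fun k : ℕ =>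
        Matrix.trace (Polynomial.aeval A (modCheb t (k + 1))) * z ^ (k + 1) / (k + 1)) ∧
      Matrix.det ((1 + (t : ℂ) * z ^ 2) • (1 : Matrix (Fin n) (Fin n) ℂ) - z • A)
        = Complex.exp (-∑' k : ℕ,
            Matrix.trace (Polynomial.aeval A (modCheb t (k + 1))) * z ^ (k + 1) / (k + 1)) := by
  obtain ⟨σ, htr, hdet⟩ := exists_spectrum n A
  set M : ℝ := (σ.map fun μ => ‖μ‖).sum with hM
  have hM0 : 0 ≤ M := Multiset.sum_nonneg (by
    intro x hx
    obtain ⟨μ, _, rfl⟩ := Multiset.mem_map.mp hx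
    exact norm_nonneg μ)
  refine ⟨1 / (M + 2), by positivity, ?_⟩
  intro z hzε
  have hz0 : (0:ℝ) ≤ ‖z‖ := norm_nonneg z
  have hσbound : ∀ μ ∈ σ, ‖z‖ * (‖μ‖ + 2) < 1 := by
    intro μ hμ
    have h1 : ‖μ‖ ≤ M := by
      rw [hM]
      exact Multiset.single_le_sum (by
        intro x hx
        obtain ⟨ν, _, rfl⟩ := Multiset.mem_map.mp hx
        exact norm_nonneg ν) _ (Multiset.mem_map_of_mem _ hμ)
    calc ‖z‖ * (‖μ‖ + 2) ≤ ‖z‖ * (M + 2) := by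
          have := norm_nonneg μ; nlinarith
      _ < (1 / (M + 2)) * (M + 2) := by
          have h2 : (0:ℝ) < M + 2 := by linarith
          exact mul_lt_mul_of_pos_right hzε h2
      _ = 1 := by field_simp
  obtain ⟨S, hS, hexp⟩ := multiset_hasSum t ht0 ht1 z σ hσbound
  have hfun : (fun k : ℕ =>
      Matrix.trace (Polynomial.aeval A (modCheb t (k + 1))) * z ^ (k + 1) / ((k : ℂ) + 1))
      = fun k : ℕ =>
      (σ.map fun μ => (modCheb t (k + 1)).eval μ).sum * z ^ (k + 1) / ((k : ℂ) + 1) := by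
    funext k
    rw [htr (modCheb t (k + 1))]
  rw [hfun]
  refine ⟨hS.summable, ?_⟩
  rw [hS.tsum_eq, hexp, hdet (1 + (t : ℂ) * z ^ 2) z]
end

section
/- For all integers k > l ≥ 1, one has Σ_{r=0}^{k−l} ( (−1)^r / (2k − r) ) · binom(2(k−r), k−r−l) · binom(2k−r, r) = 0. -/
/-- Finite-difference identity: `Σ_{r=0}^{m} (-1)^r C(m,r) C(n-r,m) = 1` for `m ≤ n`. -/
lemma diff_choose (m : ℕ) : ∀ n : ℕ, m ≤ n →
    ∑ r ∈ Finset.range (m + 1),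
      ((-1 : ℚ) ^ r * (m.choose r : ℚ) * ((n - r).choose m : ℚ)) = 1 := by
  induction m with
  | zero => intro n hn; simp
  | succ m ih =>
    intro n hn
    have hd : ∑ r ∈ Finset.range (m + 1),
        ((-1 : ℚ) ^ r * (m.choose r : ℚ) * ((n - 1 - r).choose m : ℚ)) = 1 :=
      ih (n - 1) (by omega)
    set g : ℕ → ℚ := fun r => (-1 : ℚ) ^ r * (m.choose r : ℚ) * ((n - r).choose (m + 1) : ℚ)
      with hg
    set e : ℕ → ℚ := fun r => (-1 : ℚ) ^ r * (m.choose r : ℚ) * ((n - 1 - r).choose (m + 1) : ℚ)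
      with he
    have step1 : ∑ r ∈ Finset.range (m + 1 + 1),
        ((-1 : ℚ) ^ r * ((m + 1).choose r : ℚ) * ((n - r).choose (m + 1) : ℚ))
        = ∑ r ∈ Finset.range (m + 1 + 1), g r - ∑ r ∈ Finset.range (m + 1), e r := by
      rw [Finset.sum_range_succ' (fun r => (-1 : ℚ) ^ r * ((m + 1).choose r : ℚ) *
            ((n - r).choose (m + 1) : ℚ)),
          Finset.sum_range_succ' g]
      have hterm : ∀ r ∈ Finset.range (m + 1), (-1 : ℚ) ^ (r + 1) * ((m + 1).choose (r + 1) : ℚ) *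
          ((n - (r + 1)).choose (m + 1) : ℚ) = g (r + 1) - e r := by
        intro r _
        have h1 : (m + 1).choose (r + 1) = m.choose r + m.choose (r + 1) :=
          Nat.choose_succ_succ m r
        have h2 : n - (r + 1) = n - 1 - r := by omega
        simp only [hg, he, h1, h2]
        push_cast
        ring
      have h0 : (-1 : ℚ) ^ 0 * ((m + 1).choose 0 : ℚ) * ((n - 0).choose (m + 1) : ℚ) = g 0 := by
        simp [hg]
      rw [Finset.sum_congr rfl hterm, Finset.sum_sub_distrib, h0]
      ring
    have step2 : ∑ r ∈ Finset.range (m + 1 + 1), g r = ∑ r ∈ Finset.range (m + 1), g r := by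
      rw [Finset.sum_range_succ]
      simp [hg]
    have step3 : ∀ r ∈ Finset.range (m + 1), g r - e r =
        (-1 : ℚ) ^ r * (m.choose r : ℚ) * ((n - 1 - r).choose m : ℚ) := by
      intro r hr
      rw [Finset.mem_range] at hr
      have h2 : n - r = (n - 1 - r) + 1 := by omega
      have h3 : ((n - 1 - r) + 1).choose (m + 1) =
          (n - 1 - r).choose m + (n - 1 - r).choose (m + 1) := Nat.choose_succ_succ _ _
      simp only [hg, he, h2, h3]
      push_cast
      ring
    rw [step1, step2, ← Finset.sum_sub_distrib, Finset.sum_congr rfl step3, hd]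

/-- For all integers `k > l ≥ 1`,
`Σ_{r=0}^{k−l} ((−1)^r / (2k − r)) · binom(2(k−r), k−r−l) · binom(2k−r, r) = 0`. -/
theorem stmt_13 (k l : ℕ) (hl : 1 ≤ l) (hkl : l < k) :
    ∑ r ∈ Finset.range (k - l + 1),
      ((-1 : ℚ) ^ r / ((2 * k - r : ℕ) : ℚ) *
        (((2 * (k - r)).choose (k - r - l) : ℚ)) * (((2 * k - r).choose r : ℚ))) = 0 := by
  set m := k - l with hm
  have hm1 : 1 ≤ m := by omega
  have h2kne : ((2 * k : ℕ) : ℚ) ≠ 0 := by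
    exact_mod_cast (by omega : (2 * k : ℕ) ≠ 0)
  -- Sum1 = 1
  have hSum1 : ∑ r ∈ Finset.range (m + 1),
      ((-1 : ℚ) ^ r * ((2 * (k - r)).choose (k - r - l) : ℚ) * ((2 * k - r).choose r : ℚ)) = 1 := by
    have hdc := diff_choose m (2 * k) (by omega)
    refine Eq.trans (Finset.sum_congr rfl fun r hr => ?_) hdc
    rw [Finset.mem_range] at hr
    have hr' : r ≤ m := by omega
    have key : (2 * k - r).choose m * m.choose r =
        (2 * k - r).choose r * (2 * k - r - r).choose (m - r) :=
      Nat.choose_mul hr'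
    have e1 : 2 * (k - r) = 2 * k - r - r := by omega
    have e2 : k - r - l = m - r := by omega
    rw [e1, e2]
    have hc := congrArg (fun x : ℕ => (x : ℚ)) key
    push_cast at hc
    linear_combination ((-1 : ℚ) ^ r) * hc.symm
  -- Sum2 = 1
  have hSum2 : ∑ s ∈ Finset.range m,
      ((-1 : ℚ) ^ s * ((2 * (k - (s + 1))).choose (k - (s + 1) - l) : ℚ) *
        ((2 * k - (s + 1) - 1).choose s : ℚ)) = 1 := by
    have hm' : m = (m - 1) + 1 := by omega
    have hdc := diff_choose (m - 1) (2 * k - 2) (by omega)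
    rw [hm']
    refine Eq.trans (Finset.sum_congr rfl fun s hs => ?_) hdc
    rw [Finset.mem_range] at hs
    have hs' : s ≤ m - 1 := by omega
    have key : (2 * k - 2 - s).choose (m - 1) * (m - 1).choose s =
        (2 * k - 2 - s).choose s * (2 * k - 2 - s - s).choose (m - 1 - s) :=
      Nat.choose_mul hs'
    have e1 : 2 * (k - (s + 1)) = 2 * k - 2 - s - s := by omega
    have e2 : k - (s + 1) - l = m - 1 - s := by omega
    have e3 : 2 * k - (s + 1) - 1 = 2 * k - 2 - s := by omega
    rw [e1, e2, e3]
    have hc := congrArg (fun x : ℕ => (x : ℚ)) key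
    push_cast at hc
    linear_combination ((-1 : ℚ) ^ s) * hc.symm
  -- per-term identity for r = s+1
  have hterm : ∀ s ∈ Finset.range m,
      ((2 * k : ℕ) : ℚ) * ((-1 : ℚ) ^ (s + 1) / ((2 * k - (s + 1) : ℕ) : ℚ) *
        ((2 * (k - (s + 1))).choose (k - (s + 1) - l) : ℚ) *
        ((2 * k - (s + 1)).choose (s + 1) : ℚ))
      = (-1 : ℚ) ^ (s + 1) * ((2 * (k - (s + 1))).choose (k - (s + 1) - l) : ℚ) *
          ((2 * k - (s + 1)).choose (s + 1) : ℚ)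
        - (-1 : ℚ) ^ s * ((2 * (k - (s + 1))).choose (k - (s + 1) - l) : ℚ) *
          ((2 * k - (s + 1) - 1).choose s : ℚ) := by
    intro s hs
    rw [Finset.mem_range] at hs
    have hpos : 1 ≤ 2 * k - (s + 1) := by omega
    have hne : ((2 * k - (s + 1) : ℕ) : ℚ) ≠ 0 := by
      exact_mod_cast (by omega : (2 * k - (s + 1) : ℕ) ≠ 0)
    have hnat : 2 * k * ((2 * k - (s + 1)).choose (s + 1)) =
        (2 * k - (s + 1)) * ((2 * k - (s + 1)).choose (s + 1)) +
        (2 * k - (s + 1)) * ((2 * k - (s + 1) - 1).choose s) := by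
      have h2 : 2 * k - (s + 1) - 1 + 1 = 2 * k - (s + 1) := by omega
      have h1 : (2 * k - (s + 1)) * ((2 * k - (s + 1) - 1).choose s) =
          ((2 * k - (s + 1)).choose (s + 1)) * (s + 1) := by
        have := Nat.add_one_mul_choose_eq (2 * k - (s + 1) - 1) s
        rwa [h2] at this
      have h3 : 2 * k = (2 * k - (s + 1)) + (s + 1) := by omega
      calc 2 * k * ((2 * k - (s + 1)).choose (s + 1))
          = (2 * k - (s + 1)) * ((2 * k - (s + 1)).choose (s + 1)) +
            ((2 * k - (s + 1)).choose (s + 1)) * (s + 1) := by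
            nth_rewrite 1 [h3]; ring
        _ = _ := by rw [← h1]
    have hQ : ((2 * k : ℕ) : ℚ) * ((2 * k - (s + 1)).choose (s + 1) : ℚ) =
        ((2 * k - (s + 1) : ℕ) : ℚ) * ((2 * k - (s + 1)).choose (s + 1) : ℚ) +
        ((2 * k - (s + 1) : ℕ) : ℚ) * ((2 * k - (s + 1) - 1).choose s : ℚ) := by
      exact_mod_cast congrArg (fun x : ℕ => (x : ℚ)) hnat
    rw [div_mul_eq_mul_div, div_mul_eq_mul_div, mul_div_assoc', div_eq_iff hne]
    linear_combination ((-1 : ℚ) ^ (s + 1) *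
      ((2 * (k - (s + 1))).choose (k - (s + 1) - l) : ℚ)) * hQ
  -- main computation
  have hmul : ((2 * k : ℕ) : ℚ) * (∑ r ∈ Finset.range (m + 1),
      ((-1 : ℚ) ^ r / ((2 * k - r : ℕ) : ℚ) *
        (((2 * (k - r)).choose (k - r - l) : ℚ)) * (((2 * k - r).choose r : ℚ)))) = 0 := by
    rw [Finset.mul_sum, Finset.sum_range_succ']
    have hF0 : ((2 * k : ℕ) : ℚ) * ((-1 : ℚ) ^ 0 / ((2 * k - 0 : ℕ) : ℚ) *
        (((2 * (k - 0)).choose (k - 0 - l) : ℚ)) * (((2 * k - 0).choose 0 : ℚ)))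
        = ((2 * k).choose (k - l) : ℚ) := by
      simp only [Nat.sub_zero, pow_zero, Nat.choose_zero_right, Nat.cast_one, mul_one, one_div]
      have hkq : (2 * (k : ℚ)) ≠ 0 := by push_cast at h2kne; exact h2kne
      field_simp
    rw [Finset.sum_congr rfl hterm, hF0, Finset.sum_sub_distrib, hSum2]
    have hS1' : ∑ s ∈ Finset.range m, ((-1 : ℚ) ^ (s + 1) *
        ((2 * (k - (s + 1))).choose (k - (s + 1) - l) : ℚ) *
        ((2 * k - (s + 1)).choose (s + 1) : ℚ))
        = 1 - ((2 * k).choose (k - l) : ℚ) := by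
      have := hSum1
      rw [Finset.sum_range_succ'] at this
      simp only [Nat.sub_zero, pow_zero, Nat.choose_zero_right, Nat.cast_one, mul_one,
        one_mul] at this
      have h0 : 2 * (k - 0) = 2 * k := by omega
      linarith [this]
    rw [hS1']
    ring
  rcases mul_eq_zero.mp hmul with h | h
  · exact absurd h h2kne
  · exact h
end

section
/- For every real t > 0 and every integer m ≥ 0, ∫_{−2√t}^{2√t} x^{2m} · (1/(2πt)) √(4t − x²) dx = C_m · t^m, where C_m = binom(2m, m)/(m+1) is the m-th Catalan number. In particular the density (1/(2πt)) √(4t − x²) on [−2√t, 2√t] integrates to 1. -/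
open Real intervalIntegral

open Finset in
private lemma aux_prod (m : ℕ) :
    (∏ i ∈ range m, (2 * (i : ℝ) + 1) / (2 * i + 2)) = (Nat.choose (2 * m) m : ℝ) / 4 ^ m := by
  induction m with
  | zero => simp
  | succ k ih =>
    rw [prod_range_succ, ih]
    have hkey : (k + 1) * Nat.centralBinom (k + 1) = 2 * (2 * k + 1) * Nat.centralBinom k :=
      Nat.succ_mul_centralBinom_succ k
    have h1 : ((k:ℝ) + 1) * Nat.choose (2 * (k+1)) (k+1) = 2 * (2 * k + 1) * Nat.choose (2*k) k := by
      exact_mod_cast congrArg (Nat.cast : ℕ → ℝ) hkey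
    have hk1 : ((k:ℝ) + 1) ≠ 0 := by positivity
    field_simp
    linear_combination (-2 * (4:ℝ)^k) * h1

open Finset in
private lemma aux_sin_even (k : ℕ) :
    (∫ x in (-(π/2))..(π/2), Real.sin x ^ (2 * k))
      = π * ∏ i ∈ range k, (2 * (i : ℝ) + 1) / (2 * i + 2) := by
  have hint : ∀ a b : ℝ, IntervalIntegrable (fun x => Real.sin x ^ (2*k)) MeasureTheory.volume a b :=
    fun a b => (Continuous.pow (Real.continuous_sin) _).intervalIntegrable a b
  have heven : (∫ x in (-(π/2))..(0:ℝ), Real.sin x ^ (2*k))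
      = ∫ x in (0:ℝ)..(π/2), Real.sin x ^ (2*k) := by
    have := intervalIntegral.integral_comp_neg (a := (0:ℝ)) (b := π/2)
      (fun x => Real.sin x ^ (2*k))
    simp only [neg_zero] at this
    rw [← this]
    congr 1
    ext x
    rw [Real.sin_neg]
    rw [show (2*k) = 2*k from rfl, pow_mul, pow_mul, neg_sq]
  have hsym : (∫ x in (π/2)..π, Real.sin x ^ (2*k))
      = ∫ x in (0:ℝ)..(π/2), Real.sin x ^ (2*k) := by
    have := intervalIntegral.integral_comp_sub_left (a := π/2) (b := π)
      (fun x => Real.sin x ^ (2*k)) π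
    simp only [sub_self, show π - π/2 = π/2 by ring] at this
    rw [← this]
    congr 1
    ext x
    rw [Real.sin_pi_sub]
  have h1 : (∫ x in (-(π/2))..(π/2), Real.sin x ^ (2*k))
      = (∫ x in (-(π/2))..(0:ℝ), Real.sin x ^ (2*k)) + ∫ x in (0:ℝ)..(π/2), Real.sin x ^ (2*k) :=
    (intervalIntegral.integral_add_adjacent_intervals (hint _ _) (hint _ _)).symm
  have h2 : (∫ x in (0:ℝ)..π, Real.sin x ^ (2*k))
      = (∫ x in (0:ℝ)..(π/2), Real.sin x ^ (2*k)) + ∫ x in (π/2)..π, Real.sin x ^ (2*k) :=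
    (intervalIntegral.integral_add_adjacent_intervals (hint _ _) (hint _ _)).symm
  have h3 : (∫ x in (0:ℝ)..π, Real.sin x ^ (2*k))
      = (∫ x in (0:ℝ)..(π/2), Real.sin x ^ (2*k)) + ∫ x in (0:ℝ)..(π/2), Real.sin x ^ (2*k) := by
    rw [h2, hsym]
  rw [h1, heven, ← h3, integral_sin_pow_even]

private lemma aux_J (m : ℕ) :
    (∫ u in (-1:ℝ)..1, u ^ (2 * m) * Real.sqrt (1 - u ^ 2))
      = π * ((Nat.choose (2 * m) m : ℝ) / 4 ^ m) / (2 * m + 2) := by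
  have hg : Continuous (fun u : ℝ => u ^ (2 * m) * Real.sqrt (1 - u ^ 2)) := by
    fun_prop
  have hsub := intervalIntegral.integral_comp_smul_deriv (a := -(π/2)) (b := π/2)
    (f := Real.sin) (f' := Real.cos)
    (fun x _ => Real.hasDerivAt_sin x) Real.continuous_cos.continuousOn hg
  rw [Real.sin_neg, Real.sin_pi_div_two] at hsub
  rw [← hsub]
  have hcongr : (∫ x in (-(π/2))..(π/2),
      Real.cos x • ((fun u : ℝ => u ^ (2*m) * Real.sqrt (1 - u ^ 2)) ∘ Real.sin) x)
      = ∫ x in (-(π/2))..(π/2), (Real.sin x ^ (2*m) - Real.sin x ^ (2*(m+1))) := by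
    apply intervalIntegral.integral_congr
    intro x hx
    rw [Set.uIcc_of_le (by linarith [Real.pi_pos])] at hx
    have hcos : 0 ≤ Real.cos x := Real.cos_nonneg_of_mem_Icc (by
      constructor
      · exact hx.1
      · exact hx.2)
    have h1 : (1 : ℝ) - Real.sin x ^ 2 = Real.cos x ^ 2 := by
      rw [Real.cos_sq']
    simp only [Function.comp_apply, smul_eq_mul]
    rw [h1, Real.sqrt_sq hcos]
    have : Real.sin x ^ (2*(m+1)) = Real.sin x ^ (2*m) * Real.sin x ^ 2 := by
      rw [← pow_add]; ring_nf
    rw [this]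
    linear_combination (-(Real.sin x ^ (2*m))) * h1
  rw [hcongr]
  have hint : ∀ k : ℕ, IntervalIntegrable (fun x => Real.sin x ^ (2*k))
      MeasureTheory.volume (-(π/2)) (π/2) :=
    fun k => (Continuous.pow (Real.continuous_sin) _).intervalIntegrable _ _
  rw [intervalIntegral.integral_sub (hint m) (hint (m+1)), aux_sin_even, aux_sin_even]
  rw [Finset.prod_range_succ, aux_prod]
  have h2m : ((2:ℝ) * m + 2) ≠ 0 := by positivity
  field_simp
  ring

private lemma aux_main (t : ℝ) (ht : 0 < t) (m : ℕ) :
    ∫ x in (-(2 * Real.sqrt t))..(2 * Real.sqrt t),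
        x ^ (2 * m) * (1 / (2 * π * t)) * Real.sqrt (4 * t - x ^ 2)
      = (catalan m : ℝ) * t ^ m := by
  obtain ⟨s, hs0, rfl⟩ : ∃ s : ℝ, 0 < s ∧ s ^ 2 = t :=
    ⟨Real.sqrt t, Real.sqrt_pos.mpr ht, Real.sq_sqrt ht.le⟩
  rw [Real.sqrt_sq hs0.le]
  have ha2 : (2 * s) ^ 2 = 4 * s ^ 2 := by ring
  have hscale := intervalIntegral.smul_integral_comp_mul_left
    (f := fun x => x ^ (2*m) * (1/(2*π*s^2)) * Real.sqrt (4*s^2 - x^2)) (a := -1) (b := 1)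
    (2 * s)
  rw [mul_neg_one, mul_one] at hscale
  rw [← hscale]
  have hpt : ∀ u : ℝ, ((2 * s) * u) ^ (2*m) * (1/(2*π*s^2))
        * Real.sqrt (4*s^2 - ((2 * s) * u)^2)
      = ((4*s^2)^m * (1/(2*π*s^2)) * (2 * s))
        * (u ^ (2*m) * Real.sqrt (1 - u ^ 2)) := by
    intro u
    have h1 : 4*s^2 - ((2 * s) * u)^2 = (4*s^2) * (1 - u^2) := by ring
    rw [h1, Real.sqrt_mul (by positivity), show Real.sqrt (4*s^2) = 2 * s by
      rw [show (4:ℝ)*s^2 = (2*s)^2 by ring, Real.sqrt_sq (by positivity)]]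
    rw [mul_pow, pow_mul, ha2]
    ring
  simp only [hpt]
  rw [intervalIntegral.integral_const_mul, aux_J]
  have hcat : ((m:ℝ) + 1) * (catalan m : ℝ) = (Nat.choose (2*m) m : ℝ) := by
    have := succ_mul_catalan_eq_centralBinom m
    rw [Nat.centralBinom] at this
    exact_mod_cast this
  have hpi : π ≠ 0 := Real.pi_ne_zero
  have h4 : ((4:ℝ)^m) ≠ 0 := by positivity
  have hm2 : ((2:ℝ)*m + 2) ≠ 0 := by positivity
  have hm1 : ((m:ℝ) + 1) ≠ 0 := by positivity
  rw [smul_eq_mul, mul_pow]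
  field_simp
  linear_combination (-1 : ℝ) * hcat

/-- For every real `t > 0` and every integer `m ≥ 0`,
`∫_{−2√t}^{2√t} x^{2m} · (1/(2πt)) √(4t − x²) dx = C_m · t^m`, where `C_m` is the `m`-th
Catalan number; in particular the density `(1/(2πt)) √(4t − x²)` integrates to `1`. -/
theorem stmt_15 (t : ℝ) (ht : 0 < t) (m : ℕ) :
    (∫ x in (-(2 * Real.sqrt t))..(2 * Real.sqrt t),
        x ^ (2 * m) * (1 / (2 * π * t)) * Real.sqrt (4 * t - x ^ 2)
      = (catalan m : ℝ) * t ^ m)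
    ∧ (∫ x in (-(2 * Real.sqrt t))..(2 * Real.sqrt t),
        (1 / (2 * π * t)) * Real.sqrt (4 * t - x ^ 2) = 1) := by
  refine ⟨aux_main t ht m, ?_⟩
  have h := aux_main t ht 0
  simpa using h
end

section
/- Let m ≥ 1 and n ≥ 1. The number of functions i : ℤ/(2m) → {1,…,n} such that the cardinality of the range of i equals m + 1 and the number of distinct unordered pairs {i(j), i(j+1)} for j ∈ ℤ/(2m) equals m, is exactly n(n−1)⋯(n−m) · C_m, where C_m = binom(2m, m)/(m+1) is the m-th Catalan number (the count being 0 when n ≤ m). -/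
open List DyckStep
set_option linter.unusedSectionVars false
set_option linter.unusedVariables false
set_option linter.unnecessarySimpa false
set_option maxHeartbeats 1000000

namespace Stmt16


def cnt (w : ℕ → Bool) : ℕ → ℕ
  | 0 => 0
  | k+1 => cnt w k + if w k then 1 else 0

def dnt (w : ℕ → Bool) : ℕ → ℕ
  | 0 => 0
  | k+1 => dnt w k + if w k then 0 else 1

lemma cnt_add_dnt (w : ℕ → Bool) (k : ℕ) : cnt w k + dnt w k = k := by
  induction k with
  | zero => rfl
  | succ k ih => simp only [cnt, dnt]; split <;> omega

lemma cnt_congr {w w' : ℕ → Bool} (k : ℕ) (h : ∀ j < k, w j = w' j) :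
    cnt w k = cnt w' k := by
  induction k with
  | zero => rfl
  | succ k ih =>
    simp only [cnt]
    rw [ih (fun j hj => h j (by omega)), h k (by omega)]

lemma cnt_mono (w : ℕ → Bool) : Monotone (cnt w) := by
  apply monotone_nat_of_le_succ
  intro k; simp only [cnt]; split <;> omega

lemma cnt_le_succ (w : ℕ → Bool) (k : ℕ) : cnt w (k+1) ≤ cnt w k + 1 := by
  simp only [cnt]; split <;> omega

/-- discrete IVT for cnt -/
lemma cnt_ivt (w : ℕ → Bool) (M t : ℕ) (ht : t ≤ cnt w M) : ∃ k ≤ M, cnt w k = t := by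
  induction M with
  | zero => refine ⟨0, le_rfl, ?_⟩; have h0 : cnt w 0 = 0 := rfl; omega
  | succ M ih =>
    rcases le_or_gt t (cnt w M) with h | h
    · obtain ⟨k, hk, hk2⟩ := ih h
      exact ⟨k, by omega, hk2⟩
    · have := cnt_le_succ w M
      exact ⟨M + 1, le_refl _, by omega⟩

variable {α : Type*} [DecidableEq α]

def St (w : ℕ → Bool) (σ : ℕ → α) : ℕ → List α
  | 0 => [σ 0]
  | k+1 => if w k then σ (cnt w k + 1) :: St w σ k else (St w σ k).tail

def Jw (w : ℕ → Bool) (σ : ℕ → α) (k : ℕ) : α := (St w σ k).headD (σ 0)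

section decode

variable (w : ℕ → Bool) (σ : ℕ → α) (m : ℕ)

/-- vertices visited up to time k -/
def Vw (k : ℕ) : Finset α := (Finset.range (k+1)).image (Jw w σ)

/-- edges used in the first k steps -/
def Ew (k : ℕ) : Finset (Sym2 α) := (Finset.range k).image (fun j => s(Jw w σ j, Jw w σ (j+1)))

lemma Jw_mem_Vw {j k : ℕ} (h : j ≤ k) : Jw w σ j ∈ Vw w σ k :=
  Finset.mem_image_of_mem _ (Finset.mem_range.2 (by omega))

lemma Ew_endpoints {k : ℕ} {a b : α} (h : s(a, b) ∈ Ew w σ k) :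
    a ∈ Vw w σ k ∧ b ∈ Vw w σ k := by
  simp only [Ew, Finset.mem_image, Finset.mem_range] at h
  obtain ⟨j, hj, he⟩ := h
  rw [Sym2.eq_iff] at he
  rcases he with ⟨h1, h2⟩ | ⟨h1, h2⟩ <;> subst h1 <;> subst h2 <;>
    exact ⟨Jw_mem_Vw w σ (by omega), Jw_mem_Vw w σ (by omega)⟩

lemma Vw_succ (k : ℕ) : Vw w σ (k+1) = insert (Jw w σ (k+1)) (Vw w σ k) := by
  simp only [Vw, Finset.range_add_one, Finset.image_insert]

lemma Ew_succ (k : ℕ) : Ew w σ (k+1) = insert s(Jw w σ k, Jw w σ (k+1)) (Ew w σ k) := by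
  simp only [Ew, Finset.range_add_one, Finset.image_insert]

variable (hd : ∀ k ≤ 2*m, dnt w k ≤ cnt w k) (hc : cnt w (2*m) = m)
  (hσ : ∀ t t', t ≤ m → t' ≤ m → σ t = σ t' → t = t')

include hd hc hσ

lemma decode_inv : ∀ k ≤ 2*m,
    St w σ k ≠ [] ∧
    (St w σ k).getLast? = some (σ 0) ∧
    (St w σ k).length + dnt w k = cnt w k + 1 ∧
    Vw w σ k = (Finset.range (cnt w k + 1)).image σ ∧
    (Ew w σ k).card = cnt w k ∧
    (St w σ k).Chain' (fun a b => s(a, b) ∈ Ew w σ k) ∧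
    (∀ v ∈ St w σ k, v ∈ (Finset.range (cnt w k + 1)).image σ) := by
  intro k
  induction k with
  | zero =>
    intro _
    refine ⟨by simp [St], by simp [St], by simp [St, cnt, dnt], ?_, by simp [Ew, cnt],
      by simp [St]; exact List.isChain_singleton _, ?_⟩
    · simp [Vw, Jw, St, cnt]
    · intro v hv; simp [St] at hv; simp [hv, cnt]
  | succ k ih =>
    intro hk2
    obtain ⟨h1, h2, h3, h4, h5, h6, h7⟩ := ih (by omega)
    have hcm : cnt w (k+1) ≤ m := hc ▸ cnt_mono w hk2
    have hEmono : Ew w σ k ⊆ Ew w σ (k+1) := by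
      rw [Ew_succ]; exact Finset.subset_insert _ _
    by_cases hw : w k = true
    · -- push step
      have hst : St w σ (k+1) = σ (cnt w k + 1) :: St w σ k := by
        simp [St, hw]
      have hcnt : cnt w (k+1) = cnt w k + 1 := by simp [cnt, hw]
      have hdnt : dnt w (k+1) = dnt w k := by simp [dnt, hw]
      have hJ1 : Jw w σ (k+1) = σ (cnt w k + 1) := by simp [Jw, hst]
      have hnew : σ (cnt w k + 1) ∉ Vw w σ k := by
        rw [h4]
        simp only [Finset.mem_image, Finset.mem_range, not_exists, not_and]
        intro t ht he
        have := hσ _ _ (by omega) (by omega) he.symm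
        omega
      have hJk : Jw w σ k ∈ Vw w σ k := Jw_mem_Vw w σ le_rfl
      have hne : s(Jw w σ k, σ (cnt w k + 1)) ∉ Ew w σ k := fun h =>
        hnew (Ew_endpoints w σ h).2
      refine ⟨by simp [hst], ?_, ?_, ?_, ?_, ?_, ?_⟩
      · rw [hst, getLast?_cons, h2]; simp
      · simp [hst, hcnt, hdnt]; omega
      · rw [Vw_succ, hJ1, h4, hcnt]
        conv_rhs => rw [Finset.range_add_one, Finset.image_insert]
      · rw [Ew_succ, hJ1, Finset.card_insert_of_notMem hne, h5, hcnt]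
      · rw [hst]
        obtain ⟨a, l, hl⟩ := List.exists_cons_of_ne_nil h1
        rw [hl]
        refine List.IsChain.cons_cons ?_ ?_
        · rw [Ew_succ, hJ1]
          have : Jw w σ k = a := by simp [Jw, hl]
          rw [this, Sym2.eq_swap]
          exact Finset.mem_insert_self _ _
        · rw [← hl]
          exact h6.imp (fun a b h => hEmono h)
      · intro v hv
        rw [hst] at hv
        rcases List.mem_cons.1 hv with h | h
        · exact h ▸ Finset.mem_image_of_mem _ (Finset.mem_range.2 (by omega))
        · have := h7 v h
          rw [hcnt]
          simp only [Finset.mem_image, Finset.mem_range] at this ⊢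
          obtain ⟨t, ht, he⟩ := this
          exact ⟨t, by omega, he⟩
    · -- pop step
      have hwf : w k = false := by simpa using hw
      have hst : St w σ (k+1) = (St w σ k).tail := by simp [St, hwf]
      have hcnt : cnt w (k+1) = cnt w k := by simp [cnt, hwf]
      have hdnt : dnt w (k+1) = dnt w k + 1 := by simp [dnt, hwf]
      have hlen2 : 2 ≤ (St w σ k).length := by
        have := hd (k+1) hk2
        omega
      obtain ⟨a, l, hl⟩ := List.exists_cons_of_ne_nil h1
      obtain ⟨b, l', hl'⟩ : ∃ b l', l = b :: l' := by
        cases l with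
        | nil => rw [hl] at hlen2; simp at hlen2
        | cons b l' => exact ⟨b, l', rfl⟩
      rw [hl'] at hl
      have hJk : Jw w σ k = a := by simp [Jw, hl]
      have hJ1 : Jw w σ (k+1) = b := by simp [Jw, hst, hl]
      have hedge : s(a, b) ∈ Ew w σ k := (hl ▸ h6).rel_head
      refine ⟨by simp [hst, hl], ?_, ?_, ?_, ?_, ?_, ?_⟩
      · rw [hst, hl]
        simp only [tail_cons]
        rw [← h2, hl, getLast?_cons_cons]
      · rw [hst, hl]; rw [hl] at h3
        simp only [tail_cons, length_cons] at h3 ⊢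
        omega
      · rw [Vw_succ, hJ1, h4, hcnt]
        have hb : b ∈ (Finset.range (cnt w k + 1)).image σ := h7 b (by simp [hl])
        rw [← h4] at hb ⊢
        exact (Finset.insert_eq_self.2 hb)
      · rw [Ew_succ, hJk, hJ1, hcnt, ← h5]
        congr 1
        exact Finset.insert_eq_self.2 hedge
      · rw [hst, hl]
        simp only [tail_cons]
        exact ((hl ▸ h6).tail).imp (fun a b h => hEmono h)
      · intro v hv
        rw [hst, hl] at hv
        simp only [tail_cons] at hv
        rw [hcnt]
        exact h7 v (by simp [hl, hv])


lemma cnt_le_m {k : ℕ} (hk : k ≤ 2*m) : cnt w k ≤ m := hc ▸ cnt_mono w hk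

lemma Vw_card : ∀ k ≤ 2*m, (Vw w σ k).card = cnt w k + 1 := by
  intro k hk
  obtain ⟨-, -, -, h4, -, -, -⟩ := decode_inv w σ m hd hc hσ k hk
  rw [h4, Finset.card_image_of_injOn, Finset.card_range]
  intro t ht t' ht' he
  simp only [Finset.coe_range, Set.mem_Iio] at ht ht'
  have hcm := cnt_le_m w σ m hd hc hσ hk
  exact hσ _ _ (by omega) (by omega) he

lemma Jw_zero : Jw w σ 0 = σ 0 := rfl

lemma St_final : St w σ (2*m) = [σ 0] := by
  obtain ⟨h1, h2, h3, -, -, -, -⟩ := decode_inv w σ m hd hc hσ (2*m) le_rfl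
  have hdn := cnt_add_dnt w (2*m)
  have hlen : (St w σ (2*m)).length = 1 := by omega
  obtain ⟨x, hx⟩ := List.length_eq_one_iff.1 hlen
  rw [hx] at h2 ⊢
  simp only [getLast?_singleton, Option.some.injEq] at h2
  rw [h2]

lemma Jw_final : Jw w σ (2*m) = σ 0 := by
  rw [Jw, St_final w σ m hd hc hσ]; rfl

lemma Ew_card_final : (Ew w σ (2*m)).card = m := by
  obtain ⟨-, -, -, -, h5, -, -⟩ := decode_inv w σ m hd hc hσ (2*m) le_rfl
  rw [h5, hc]

lemma Vw_final : Vw w σ (2*m) = (Finset.range (m+1)).image σ := by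
  obtain ⟨-, -, -, h4, -, -, -⟩ := decode_inv w σ m hd hc hσ (2*m) le_rfl
  rw [h4, hc]

lemma w_recover : ∀ k < 2*m, (w k = true ↔ Jw w σ (k+1) ∉ Vw w σ k) := by
  intro k hk
  obtain ⟨h1, -, h3, h4, -, -, h7⟩ := decode_inv w σ m hd hc hσ k (by omega)
  by_cases hw : w k = true
  · have hst : St w σ (k+1) = σ (cnt w k + 1) :: St w σ k := by simp [St, hw]
    have hJ1 : Jw w σ (k+1) = σ (cnt w k + 1) := by simp [Jw, hst]
    have hcm : cnt w (k+1) ≤ m := cnt_le_m w σ m hd hc hσ (by omega)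
    have hcnt : cnt w (k+1) = cnt w k + 1 := by simp [cnt, hw]
    simp only [hw, true_iff, hJ1, h4]
    simp only [Finset.mem_image, Finset.mem_range, not_exists, not_and]
    intro t ht he
    have := hσ _ _ (by omega) (by omega) he.symm
    omega
  · have hwf : w k = false := by simpa using hw
    have hst : St w σ (k+1) = (St w σ k).tail := by simp [St, hwf]
    have hlen2 : 2 ≤ (St w σ k).length := by
      have h1' := hd (k+1) (by omega)
      have h2' : cnt w (k+1) = cnt w k := by simp [cnt, hwf]
      have h3' : dnt w (k+1) = dnt w k + 1 := by simp [dnt, hwf]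
      omega
    obtain ⟨a, l, hl⟩ := List.exists_cons_of_ne_nil h1
    obtain ⟨b, l', hl'⟩ : ∃ b l', l = b :: l' := by
      cases l with
      | nil => rw [hl] at hlen2; simp at hlen2
      | cons b l' => exact ⟨b, l', rfl⟩
    rw [hl'] at hl
    have hJ1 : Jw w σ (k+1) = b := by simp [Jw, hst, hl]
    have hb : Jw w σ (k+1) ∈ Vw w σ k := by
      rw [hJ1, h4]; exact h7 b (by simp [hl])
    simp [hwf, hb]

lemma sigma_recover : ∀ t ≤ m, Jw w σ (sInf {k | (Vw w σ k).card = t+1}) = σ t := by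
  intro t ht
  have hVw0 : (Vw w σ 0).card = 1 := by
    have := Vw_card w σ m hd hc hσ 0 (by omega)
    simpa [cnt] using this
  rcases Nat.eq_zero_or_pos t with rfl | htpos
  · have h0 : (0:ℕ) ∈ {k | (Vw w σ k).card = 0+1} := hVw0
    have : sInf {k | (Vw w σ k).card = 0+1} = 0 := Nat.le_zero.1 (Nat.sInf_le h0)
    rw [this]; rfl
  · obtain ⟨kw, hkw, hkw2⟩ := cnt_ivt w (2*m) t (by rw [hc]; exact ht)
    have hne : {k | (Vw w σ k).card = t+1}.Nonempty :=
      ⟨kw, by rw [Set.mem_setOf_eq, Vw_card w σ m hd hc hσ kw hkw, hkw2]⟩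
    set k0 := sInf {k | (Vw w σ k).card = t+1} with hk0def
    have hk0mem : (Vw w σ k0).card = t + 1 := Nat.sInf_mem hne
    have hk0le : k0 ≤ kw := Nat.sInf_le (by rw [Set.mem_setOf_eq,
      Vw_card w σ m hd hc hσ kw hkw, hkw2])
    have hk0pos : k0 ≠ 0 := by
      intro h; rw [h] at hk0mem; omega
    obtain ⟨k1, hk1⟩ : ∃ k1, k0 = k1 + 1 := ⟨k0 - 1, by omega⟩
    have hnot : (Vw w σ k1).card ≠ t + 1 := by
      intro h
      have := Nat.sInf_le (show k1 ∈ {k | (Vw w σ k).card = t+1} from h)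
      omega
    rw [hk1] at hk0mem
    have hc0 : cnt w (k1+1) = t := by
      have := Vw_card w σ m hd hc hσ (k1+1) (by omega); omega
    have hc1 : cnt w k1 = t - 1 := by
      have h1 := Vw_card w σ m hd hc hσ k1 (by omega)
      have h2 := cnt_le_succ w k1
      have h3 := cnt_mono w (show k1 ≤ k1 + 1 by omega)
      omega
    have hw : w k1 = true := by
      by_contra hwf
      simp only [Bool.not_eq_true] at hwf
      have : cnt w (k1+1) = cnt w k1 := by simp [cnt, hwf]
      omega
    have hst : St w σ (k1+1) = σ (cnt w k1 + 1) :: St w σ k1 := by simp [St, hw]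
    have : cnt w k1 + 1 = t := by omega
    rw [hk1, Jw, hst, this]; rfl

lemma Vw_last (hm : 1 ≤ m) : Vw w σ (2*m) = Vw w σ (2*m - 1) := by
  have h2m : 2*m = (2*m-1)+1 := by omega
  have hJ : Jw w σ (2*m) ∈ Vw w σ (2*m - 1) := by
    rw [Jw_final w σ m hd hc hσ]
    exact Jw_mem_Vw w σ (show 0 ≤ 2*m-1 by omega)
  calc Vw w σ (2*m) = Vw w σ ((2*m-1)+1) := by rw [← h2m]
    _ = insert (Jw w σ ((2*m-1)+1)) (Vw w σ (2*m-1)) := Vw_succ w σ _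
    _ = Vw w σ (2*m-1) := by rw [Finset.insert_eq_self.2 (by rw [← h2m]; exact hJ)]

lemma Vw_wit (hm : 1 ≤ m) : ∀ t ≤ m,
    ∃ x ∈ {k | (Vw w σ k).card = t+1}, x ≤ 2*m - 1 := by
  intro t ht
  obtain ⟨k, hk, hck⟩ := cnt_ivt w (2*m) t (by rw [hc]; exact ht)
  have hcard : (Vw w σ k).card = t+1 := by
    rw [Vw_card w σ m hd hc hσ k hk, hck]
  rcases le_or_gt k (2*m-1) with h | h
  · exact ⟨k, hcard, h⟩
  · have hk2 : k = 2*m := by omega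
    refine ⟨2*m-1, ?_, le_rfl⟩
    rw [Set.mem_setOf_eq, ← Vw_last w σ m hd hc hσ hm, ← hk2]
    exact hcard

end decode

section PartB


variable {α : Type*}

/-- first (discovery) time of a vertex -/
noncomputable def disc (I : ℕ → α) (v : α) : ℕ := sInf {k | I k = v}

/-- parent of a vertex (the vertex before it at discovery) -/
noncomputable def par (I : ℕ → α) (v : α) : α := I (disc I v - 1)

lemma disc_le (I : ℕ → α) {k : ℕ} {v : α} (h : I k = v) : disc I v ≤ k := Nat.sInf_le h

lemma I_disc (I : ℕ → α) {v : α} (h : ∃ k, I k = v) : I (disc I v) = v := Nat.sInf_mem h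

lemma disc_par_lt (I : ℕ → α) {v : α} (h : disc I v ≠ 0) : disc I (par I v) < disc I v :=
  lt_of_le_of_lt (disc_le I rfl) (by omega)

/-- ancestor chain of a vertex -/
noncomputable def anc (I : ℕ → α) (v : α) : List α :=
  if h : disc I v = 0 then [v] else v :: anc I (par I v)
termination_by disc I v
decreasing_by exact disc_par_lt I h

lemma anc_root (I : ℕ → α) {v : α} (h : disc I v = 0) : anc I v = [v] := by
  rw [anc, dif_pos h]

lemma anc_cons (I : ℕ → α) {v : α} (h : disc I v ≠ 0) : anc I v = v :: anc I (par I v) := by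
  rw [anc, dif_neg h]

lemma anc_ne_nil (I : ℕ → α) (v : α) : anc I v ≠ [] := by
  by_cases h : disc I v = 0
  · rw [anc_root I h]; simp
  · rw [anc_cons I h]; simp

lemma head_anc (I : ℕ → α) (v : α) (d : α) : (anc I v).headD d = v := by
  by_cases h : disc I v = 0
  · rw [anc_root I h]; rfl
  · rw [anc_cons I h]; rfl

lemma mem_anc_self (I : ℕ → α) (v : α) : v ∈ anc I v := by
  by_cases h : disc I v = 0
  · rw [anc_root I h]; simp
  · rw [anc_cons I h]; simp

lemma mem_anc_disc_le_aux (I : ℕ → α) :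
    ∀ (d : ℕ) (v : α), disc I v ≤ d → ∀ u ∈ anc I v, disc I u ≤ disc I v := by
  intro d
  induction d with
  | zero =>
    intro v hv u hu
    rw [anc_root I (by omega)] at hu
    simp only [mem_singleton] at hu
    subst hu; exact le_refl _
  | succ d ih =>
    intro v hv u hu
    by_cases h : disc I v = 0
    · rw [anc_root I h] at hu
      simp only [mem_singleton] at hu
      subst hu; exact le_refl _
    · rw [anc_cons I h] at hu
      rcases mem_cons.1 hu with rfl | hu
      · exact le_refl _
      · have hlt := disc_par_lt I h
        have := ih (par I v) (by omega) u hu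
        omega

lemma mem_anc_disc_le (I : ℕ → α) (v : α) : ∀ u ∈ anc I v, disc I u ≤ disc I v :=
  mem_anc_disc_le_aux I (disc I v) v le_rfl

lemma not_mem_anc_par (I : ℕ → α) {v : α} (h : disc I v ≠ 0) : v ∉ anc I (par I v) := by
  intro hm
  have h1 := mem_anc_disc_le I (par I v) v hm
  have h2 := disc_par_lt I h
  omega

section structural

variable [DecidableEq α] (I : ℕ → α)

def VI (k : ℕ) : Finset α := (Finset.range (k+1)).image I
def edg (k : ℕ) : Sym2 α := s(I k, I (k+1))
def EI (k : ℕ) : Finset (Sym2 α) := (Finset.range k).image (edg I)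
def vnew (k : ℕ) : Prop := I (k+1) ∉ VI I k
def enew (k : ℕ) : Prop := edg I k ∉ EI I k

instance (k : ℕ) : Decidable (vnew I k) := by unfold vnew; infer_instance
instance (k : ℕ) : Decidable (enew I k) := by unfold enew; infer_instance

lemma VI_succ (k : ℕ) : VI I (k+1) = insert (I (k+1)) (VI I k) := by
  simp only [VI, Finset.range_add_one, Finset.image_insert]

lemma EI_succ (k : ℕ) : EI I (k+1) = insert (edg I k) (EI I k) := by
  simp only [EI, Finset.range_add_one, Finset.image_insert]

lemma mem_VI {j k : ℕ} (h : j ≤ k) : I j ∈ VI I k :=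
  Finset.mem_image_of_mem _ (Finset.mem_range.2 (by omega))

lemma card_VI (k : ℕ) :
    (VI I k).card = 1 + ((Finset.range k).filter (vnew I)).card := by
  induction k with
  | zero => simp [VI]
  | succ k ih =>
    rw [VI_succ, Finset.range_add_one, Finset.filter_insert]
    by_cases h : vnew I k
    · rw [if_pos h, Finset.card_insert_of_notMem h,
        Finset.card_insert_of_notMem (by simpa using Finset.not_mem_range_self), ih]
      omega
    · rw [if_neg h]
      have : I (k+1) ∈ VI I k := by simpa [vnew] using h
      rw [Finset.insert_eq_self.2 this, ih]

lemma card_EI (k : ℕ) :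
    (EI I k).card = ((Finset.range k).filter (enew I)).card := by
  induction k with
  | zero => simp [EI]
  | succ k ih =>
    rw [EI_succ, Finset.range_add_one, Finset.filter_insert]
    by_cases h : enew I k
    · rw [if_pos h, Finset.card_insert_of_notMem h,
        Finset.card_insert_of_notMem (by simpa using Finset.not_mem_range_self), ih]
    · rw [if_neg h]
      have : edg I k ∈ EI I k := by simpa [enew] using h
      rw [Finset.insert_eq_self.2 this, ih]

lemma EI_endpoints {k : ℕ} {a b : α} (h : s(a, b) ∈ EI I k) :
    a ∈ VI I k ∧ b ∈ VI I k := by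
  simp only [EI, Finset.mem_image, Finset.mem_range] at h
  obtain ⟨j, hj, he⟩ := h
  rw [edg, Sym2.eq_iff] at he
  rcases he with ⟨h1, h2⟩ | ⟨h1, h2⟩ <;> subst h1 <;> subst h2 <;>
    exact ⟨mem_VI I (by omega), mem_VI I (by omega)⟩

lemma vnew_enew {k : ℕ} (h : vnew I k) : enew I k := by
  intro he
  exact h (EI_endpoints I (show s(I k, I (k+1)) ∈ EI I k from he)).2

end structural

section main

variable [DecidableEq α] (I : ℕ → α) (m : ℕ) (hm : 1 ≤ m)
  (hper : I (2*m) = I 0)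
  (hV : (VI I (2*m)).card = m + 1)
  (hE : (EI I (2*m)).card = m)

/-- first use time of an edge -/
noncomputable def fu (e : Sym2 α) : ℕ := sInf {k | edg I k = e}

/-- the child vertex of an edge -/
noncomputable def chl (e : Sym2 α) : α := I (fu I e + 1)

lemma fu_spec {e : Sym2 α} (he : e ∈ EI I (2*m)) :
    fu I e < 2*m ∧ edg I (fu I e) = e := by
  simp only [EI, Finset.mem_image, Finset.mem_range] at he
  obtain ⟨j, hj, hje⟩ := he
  have h1 : fu I e ≤ j := Nat.sInf_le (show j ∈ {k | edg I k = e} from hje)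
  have h2 : edg I (fu I e) = e := Nat.sInf_mem (⟨j, hje⟩ : {k | edg I k = e}.Nonempty)
  exact ⟨by omega, h2⟩

lemma enew_fu {e : Sym2 α} (he : e ∈ EI I (2*m)) : enew I (fu I e) := by
  intro hmem
  simp only [EI, Finset.mem_image, Finset.mem_range] at hmem
  rw [(fu_spec I m he).2] at hmem
  obtain ⟨j, hj, hje⟩ := hmem
  have hfj : fu I e ≤ j := Nat.sInf_le (show j ∈ {k | edg I k = e} from hje)
  omega

include hper hV hE

lemma filters_eq :
    (Finset.range (2*m)).filter (vnew I) = (Finset.range (2*m)).filter (enew I) := by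
  have hsub : (Finset.range (2*m)).filter (vnew I) ⊆ (Finset.range (2*m)).filter (enew I) :=
    Finset.monotone_filter_right _ (fun k _ hk => vnew_enew I hk)
  have hcv : ((Finset.range (2*m)).filter (vnew I)).card = m := by
    have h1 := card_VI I (2*m)
    omega
  have hce : ((Finset.range (2*m)).filter (enew I)).card = m := by
    have h1 := card_EI I (2*m)
    omega
  exact Finset.eq_of_subset_of_card_le hsub (by omega)

lemma enew_vnew {k : ℕ} (hk : k < 2*m) (he : enew I k) : vnew I k := by
  have h1 : k ∈ (Finset.range (2*m)).filter (enew I) :=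
    Finset.mem_filter.2 ⟨Finset.mem_range.2 hk, he⟩
  rw [← filters_eq I m hper hV hE] at h1
  exact (Finset.mem_filter.1 h1).2

lemma disc_chl {e : Sym2 α} (he : e ∈ EI I (2*m)) : disc I (chl I e) = fu I e + 1 := by
  obtain ⟨hfu, hedg⟩ := fu_spec I m he
  have hv : vnew I (fu I e) := enew_vnew I m hper hV hE hfu (enew_fu I m he)
  have hle : disc I (chl I e) ≤ fu I e + 1 := disc_le I rfl
  rcases Nat.lt_or_ge (disc I (chl I e)) (fu I e + 1) with hlt | hge
  · exfalso
    have h1 : I (disc I (chl I e)) = chl I e := I_disc I ⟨fu I e + 1, rfl⟩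
    have h2 : chl I e ∈ VI I (fu I e) := h1 ▸ mem_VI I (by omega)
    exact hv h2
  · omega

lemma disc_chl_ne {e : Sym2 α} (he : e ∈ EI I (2*m)) : disc I (chl I e) ≠ 0 := by
  rw [disc_chl I m hper hV hE he]; omega

lemma chl_spec {e : Sym2 α} (he : e ∈ EI I (2*m)) :
    e = s(par I (chl I e), chl I e) := by
  obtain ⟨hfu, hedg⟩ := fu_spec I m he
  have hp : par I (chl I e) = I (fu I e) := by
    rw [par, disc_chl I m hper hV hE he]
    simp
  rw [hp]
  exact hedg.symm

lemma chl_ne_root {e : Sym2 α} (he : e ∈ EI I (2*m)) : chl I e ≠ I 0 := by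
  intro h
  have h1 := disc_chl_ne I m hper hV hE he
  have h2 : disc I (I 0) = 0 := Nat.le_zero.1 (disc_le I rfl)
  rw [h] at h1
  exact h1 h2

lemma step_ne {e : Sym2 α} (he : e ∈ EI I (2*m)) {k : ℕ} (hk : k < 2*m)
    (hne : edg I k ≠ e) :
    (chl I e ∈ anc I (I k) ↔ chl I e ∈ anc I (I (k+1))) := by
  set e' := edg I k with he'def
  have he' : e' ∈ EI I (2*m) :=
    Finset.mem_image_of_mem _ (Finset.mem_range.2 hk)
  have h1 := chl_spec I m hper hV hE he'
  have hcc : chl I e ≠ chl I e' := by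
    intro h
    apply hne
    have h2 := chl_spec I m hper hV hE he
    rw [he'def, h2, h, ← h1]
  have key : (chl I e ∈ anc I (chl I e') ↔
      chl I e ∈ anc I (par I (chl I e'))) := by
    rw [anc_cons I (disc_chl_ne I m hper hV hE he')]
    simp [hcc]
  have h2 : s(I k, I (k+1)) = s(par I (chl I e'), chl I e') := h1
  rw [Sym2.eq_iff] at h2
  rcases h2 with ⟨ha, hb⟩ | ⟨ha, hb⟩
  · rw [ha, hb]; exact key.symm
  · rw [ha, hb]; exact key

lemma step_eq {e : Sym2 α} (he : e ∈ EI I (2*m)) {k : ℕ}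
    (heq : edg I k = e) :
    ¬(chl I e ∈ anc I (I k) ↔ chl I e ∈ anc I (I (k+1))) := by
  have h1 := chl_spec I m hper hV hE he
  have hself : chl I e ∈ anc I (chl I e) := mem_anc_self I _
  have hnot : chl I e ∉ anc I (par I (chl I e)) :=
    not_mem_anc_par I (disc_chl_ne I m hper hV hE he)
  have h2 : s(I k, I (k+1)) = s(par I (chl I e), chl I e) := heq.symm ▸ h1
  rw [Sym2.eq_iff] at h2
  rcases h2 with ⟨ha, hb⟩ | ⟨ha, hb⟩ <;> rw [ha, hb] <;> tauto

lemma uses_parity {e : Sym2 α} (he : e ∈ EI I (2*m)) :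
    ∀ k ≤ 2*m, ((chl I e ∈ anc I (I k)) ↔
      ((Finset.range k).filter (fun j => edg I j = e)).card % 2 = 1) := by
  intro k
  induction k with
  | zero =>
    intro _
    have h0 : disc I (I 0) = 0 := Nat.le_zero.1 (disc_le I rfl)
    rw [anc_root I h0]
    simp only [mem_singleton]
    constructor
    · intro h; exact absurd h (chl_ne_root I m hper hV hE he)
    · intro h; simp at h
  | succ k ih =>
    intro hk
    have ihk := ih (by omega)
    rw [Finset.range_add_one, Finset.filter_insert]
    by_cases hke : edg I k = e
    · have hflip := step_eq I m hper hV hE he hke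
      rw [if_pos hke, Finset.card_insert_of_notMem (by simp)]
      constructor
      · intro h
        have : ¬(chl I e ∈ anc I (I k)) := fun h' => hflip ⟨fun _ => h, fun _ => h'⟩
        rw [ihk] at this
        omega
      · intro h
        by_contra h'
        have : chl I e ∈ anc I (I k) := by
          by_contra h''
          exact hflip ⟨fun a => absurd a h'', fun a => absurd a h'⟩
        rw [ihk] at this
        omega
    · have hsame := step_ne I m hper hV hE he (by omega) hke
      rw [if_neg hke, ← hsame, ihk]
  
lemma uses_two : ∀ e ∈ EI I (2*m),
    ((Finset.range (2*m)).filter (fun j => edg I j = e)).card = 2 := by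
  have htot : (Finset.range (2*m)).card =
      ∑ e ∈ EI I (2*m), ((Finset.range (2*m)).filter (fun j => edg I j = e)).card :=
    Finset.card_eq_sum_card_fiberwise
      (fun k hk => Finset.mem_image_of_mem _ hk)
  rw [Finset.card_range] at htot
  have hge : ∀ e ∈ EI I (2*m),
      2 ≤ ((Finset.range (2*m)).filter (fun j => edg I j = e)).card := by
    intro e he
    have heven : ((Finset.range (2*m)).filter (fun j => edg I j = e)).card % 2 = 0 := by
      have h1 := uses_parity I m hper hV hE he (2*m) le_rfl
      rw [hper] at h1
      have h0 : disc I (I 0) = 0 := Nat.le_zero.1 (disc_le I rfl)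
      rw [anc_root I h0] at h1
      simp only [mem_singleton] at h1
      by_contra hodd
      have hcard : ((Finset.range (2*m)).filter (fun j => edg I j = e)).card % 2 = 1 := by
        omega
      exact (chl_ne_root I m hper hV hE he) (h1.2 hcard)
    have hpos : 0 < ((Finset.range (2*m)).filter (fun j => edg I j = e)).card := by
      rw [Finset.card_pos]
      exact ⟨fu I e, Finset.mem_filter.2 ⟨Finset.mem_range.2 (fu_spec I m he).1,
        (fu_spec I m he).2⟩⟩
    omega
  by_contra hcon
  push_neg at hcon
  obtain ⟨e0, he0, hne0⟩ := hcon
  have hlt : ∑ e ∈ EI I (2*m), 2 <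
      ∑ e ∈ EI I (2*m), ((Finset.range (2*m)).filter (fun j => edg I j = e)).card := by
    apply Finset.sum_lt_sum hge
    exact ⟨e0, he0, by have := hge e0 he0; omega⟩
  rw [Finset.sum_const, hE, ← htot] at hlt
  simp only [smul_eq_mul] at hlt
  omega

lemma structure_thm {k : ℕ} (hk : k < 2*m) (hnv : ¬ vnew I k) :
    disc I (I k) ≠ 0 ∧ I (k+1) = par I (I k) := by
  have hne : ¬ enew I k := fun h => hnv (enew_vnew I m hper hV hE hk h)
  have he : edg I k ∈ EI I (2*m) := Finset.mem_image_of_mem _ (Finset.mem_range.2 hk)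
  set e := edg I k with hedef
  -- first use is strictly before k
  have hfuk : fu I e < k := by
    have h1 : fu I e ≤ k := Nat.sInf_le rfl
    rcases Nat.lt_or_ge (fu I e) k with h | h
    · exact h
    · exfalso
      have hfk : fu I e = k := by omega
      apply hne
      intro hmem
      simp only [EI, Finset.mem_image, Finset.mem_range] at hmem
      obtain ⟨j, hj, hje⟩ := hmem
      have hfj : fu I e ≤ j := Nat.sInf_le (show j ∈ {k | edg I k = e} from hje)
      omega
  -- the filter is exactly the pair {fu e, k}
  have hpair : (Finset.range (2*m)).filter (fun j => edg I j = e) = {fu I e, k} := by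
    apply (Finset.eq_of_subset_of_card_le ?_ ?_).symm
    · intro j hj
      rcases Finset.mem_insert.1 hj with rfl | hj
      · exact Finset.mem_filter.2 ⟨Finset.mem_range.2 (by omega), (fu_spec I m he).2⟩
      · rw [Finset.mem_singleton] at hj
        subst hj
        exact Finset.mem_filter.2 ⟨Finset.mem_range.2 hk, rfl⟩
    · rw [uses_two I m hper hV hE e he, Finset.card_insert_of_notMem (by
        simp only [Finset.mem_singleton]; omega), Finset.card_singleton]
  -- constancy of side between the two uses
  have hconst : ∀ d, fu I e + 1 + d ≤ k → chl I e ∈ anc I (I (fu I e + 1 + d)) := by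
    intro d
    induction d with
    | zero =>
      intro _
      have : I (fu I e + 1 + 0) = chl I e := rfl
      rw [this]
      exact mem_anc_self I _
    | succ d ih =>
      intro hd
      have hj : fu I e + 1 + d < k := by omega
      have hjne : edg I (fu I e + 1 + d) ≠ e := by
        intro hje
        have hmem : (fu I e + 1 + d) ∈ (Finset.range (2*m)).filter
            (fun j => edg I j = e) :=
          Finset.mem_filter.2 ⟨Finset.mem_range.2 (by omega), hje⟩
        rw [hpair] at hmem
        rcases Finset.mem_insert.1 hmem with h | h
        · omega
        · rw [Finset.mem_singleton] at h; omega
      have := (step_ne I m hper hV hE he (by omega) hjne).1 (ih (by omega))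
      have heq : fu I e + 1 + (d + 1) = (fu I e + 1 + d) + 1 := by omega
      rw [heq]
      exact this
  have hsidek : chl I e ∈ anc I (I k) := by
    have := hconst (k - (fu I e) - 1) (by omega)
    have heq : fu I e + 1 + (k - fu I e - 1) = k := by omega
    rwa [heq] at this
  -- conclude
  have h1 := chl_spec I m hper hV hE he
  have h2 : s(I k, I (k+1)) = s(par I (chl I e), chl I e) := h1
  rw [Sym2.eq_iff] at h2
  rcases h2 with ⟨ha, hb⟩ | ⟨ha, hb⟩
  · exfalso
    rw [ha] at hsidek
    exact not_mem_anc_par I (disc_chl_ne I m hper hV hE he) hsidek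
  · constructor
    · rw [ha]; exact disc_chl_ne I m hper hV hE he
    · rw [hb, ha]

lemma vnew_disc {k : ℕ} (hv : vnew I k) :
    disc I (I (k+1)) = k + 1 ∧ par I (I (k+1)) = I k := by
  have hle : disc I (I (k+1)) ≤ k + 1 := disc_le I rfl
  have heq : disc I (I (k+1)) = k + 1 := by
    rcases Nat.lt_or_ge (disc I (I (k+1))) (k+1) with hlt | hge
    · exfalso
      have h1 : I (disc I (I (k+1))) = I (k+1) := I_disc I ⟨k+1, rfl⟩
      exact hv (h1 ▸ mem_VI I (by omega))
    · omega
  refine ⟨heq, ?_⟩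
  rw [par, heq]
  simp

-- ===================== Part C : encoding a valid walk =====================
omit hper hV hE

/-- the up/down word of the walk -/
def wI : ℕ → Bool := fun k => decide (vnew I k)

/-- first time the walk has seen `t+1` vertices -/
noncomputable def NI (t : ℕ) : ℕ := sInf {k | (VI I k).card = t + 1}

/-- the vertices in discovery order -/
noncomputable def σI (t : ℕ) : α := I (NI I t)

lemma VI_mono {j k : ℕ} (h : j ≤ k) : VI I j ⊆ VI I k :=
  Finset.image_subset_image (Finset.range_subset_range.2 (by omega))

lemma card_VI_zero : (VI I 0).card = 1 := by
  simp [VI]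

lemma cnt_wI : ∀ k, cnt (wI I) k + 1 = (VI I k).card := by
  intro k
  induction k with
  | zero => rw [card_VI_zero]; rfl
  | succ k ih =>
    by_cases hv : vnew I k
    · have hw : wI I k = true := decide_eq_true hv
      have h1 : cnt (wI I) (k+1) = cnt (wI I) k + 1 := by simp [cnt, hw]
      have h2 : (VI I (k+1)).card = (VI I k).card + 1 := by
        rw [VI_succ, Finset.card_insert_of_notMem hv]
      omega
    · have hw : wI I k = false := decide_eq_false hv
      have h1 : cnt (wI I) (k+1) = cnt (wI I) k := by simp [cnt, hw]
      have h2 : (VI I (k+1)).card = (VI I k).card := by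
        rw [VI_succ, Finset.insert_eq_self.2 (by simpa [vnew] using hv)]
      omega

lemma dnt_wI (k : ℕ) : cnt (wI I) k + dnt (wI I) k = k := cnt_add_dnt _ k

lemma NI_zero : NI I 0 = 0 :=
  Nat.le_zero.1 (Nat.sInf_le (show (0:ℕ) ∈ {k | (VI I k).card = 0 + 1} from card_VI_zero I))

lemma σI_zero : σI I 0 = I 0 := by rw [σI, NI_zero]

include hper hV hE in
lemma hc_wI : cnt (wI I) (2*m) = m := by
  have h1 := cnt_wI I (2*m)
  omega

include hper hV hE in
lemma fwd_inv : ∀ k ≤ 2*m,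
    St (wI I) (σI I) k = anc I (I k) ∧
    cnt (wI I) k + 1 = (anc I (I k)).length + dnt (wI I) k := by
  intro k
  induction k with
  | zero =>
    intro _
    have hd0 : disc I (I 0) = 0 := Nat.le_zero.1 (disc_le I rfl)
    refine ⟨?_, ?_⟩
    · show [σI I 0] = anc I (I 0)
      rw [σI_zero, anc_root I hd0]
    · rw [anc_root I hd0]
      simp [cnt, dnt]
  | succ k ih =>
    intro hk
    obtain ⟨ih1, ih2⟩ := ih (by omega)
    by_cases hv : vnew I k
    · have hw : wI I k = true := decide_eq_true hv
      obtain ⟨hdisc, hpar⟩ := vnew_disc I m hper hV hE hv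
      have hst : St (wI I) (σI I) (k+1) = σI I (cnt (wI I) k + 1) :: St (wI I) (σI I) k := by
        simp [St, hw]
      have hcv : cnt (wI I) k + 1 = (VI I k).card := cnt_wI I k
      have hmem : (VI I (k+1)).card = (VI I k).card + 1 := by
        rw [VI_succ, Finset.card_insert_of_notMem hv]
      have hni : NI I ((VI I k).card) = k + 1 := by
        have hmm : (k+1) ∈ {j | (VI I j).card = (VI I k).card + 1} := hmem
        have hle : NI I ((VI I k).card) ≤ k + 1 := Nat.sInf_le hmm
        have hsm : (VI I (NI I ((VI I k).card))).card = (VI I k).card + 1 :=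
          Nat.sInf_mem (⟨k+1, hmm⟩ : {j | (VI I j).card = (VI I k).card + 1}.Nonempty)
        rcases Nat.lt_or_ge (NI I ((VI I k).card)) (k+1) with hlt | hge
        · exfalso
          have : VI I (NI I ((VI I k).card)) ⊆ VI I k := VI_mono I (by omega)
          have := Finset.card_le_card this
          omega
        · omega
      have hσv : σI I (cnt (wI I) k + 1) = I (k+1) := by
        rw [σI, hcv, hni]
      have hanc : anc I (I (k+1)) = I (k+1) :: anc I (I k) := by
        rw [anc_cons I (by omega), par, hdisc]
        simp
      refine ⟨?_, ?_⟩
      · rw [hst, hσv, ih1, hanc]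
      · have h1 : cnt (wI I) (k+1) = cnt (wI I) k + 1 := by simp [cnt, hw]
        have h2 : dnt (wI I) (k+1) = dnt (wI I) k := by simp [dnt, hw]
        rw [hanc]
        simp only [length_cons]
        omega
    · have hw : wI I k = false := decide_eq_false hv
      obtain ⟨hdisc, hpar⟩ := structure_thm I m hper hV hE (by omega) hv
      have hst : St (wI I) (σI I) (k+1) = (St (wI I) (σI I) k).tail := by
        simp [St, hw]
      have hanc : anc I (I k) = I k :: anc I (I (k+1)) := by
        rw [anc_cons I hdisc, hpar]
      refine ⟨?_, ?_⟩
      · rw [hst, ih1, hanc, List.tail_cons]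
      · have h1 : cnt (wI I) (k+1) = cnt (wI I) k := by simp [cnt, hw]
        have h2 : dnt (wI I) (k+1) = dnt (wI I) k + 1 := by simp [dnt, hw]
        rw [hanc] at ih2
        simp only [length_cons] at ih2
        omega

include hper hV hE in
lemma hd_wI : ∀ k ≤ 2*m, dnt (wI I) k ≤ cnt (wI I) k := by
  intro k hk
  obtain ⟨-, h2⟩ := fwd_inv I m hper hV hE k hk
  have h3 : 0 < (anc I (I k)).length := List.length_pos_iff.2 (anc_ne_nil I _)
  omega

include hper hV hE in
lemma Jw_eq_I : ∀ k ≤ 2*m, Jw (wI I) (σI I) k = I k := by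
  intro k hk
  obtain ⟨h1, -⟩ := fwd_inv I m hper hV hE k hk
  rw [Jw, h1, head_anc]

include hper hV hE in
lemma NI_spec : ∀ t ≤ m, NI I t ≤ 2*m ∧ (VI I (NI I t)).card = t + 1 := by
  intro t ht
  obtain ⟨k, hk, hck⟩ := cnt_ivt (wI I) (2*m) t (by rw [hc_wI I m hper hV hE]; exact ht)
  have hmm : k ∈ {j | (VI I j).card = t + 1} := by
    have := cnt_wI I k
    simp only [Set.mem_setOf_eq]
    omega
  exact ⟨le_trans (Nat.sInf_le hmm) hk,
    Nat.sInf_mem (⟨k, hmm⟩ : {j | (VI I j).card = t + 1}.Nonempty)⟩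

include hper hV hE in
lemma σI_ne : ∀ t t', t < t' → t' ≤ m → σI I t ≠ σI I t' := by
  intro t t' htt ht'
  obtain ⟨hN2m, hNcard⟩ := NI_spec I m hper hV hE t (by omega)
  obtain ⟨hN2m', hNcard'⟩ := NI_spec I m hper hV hE t' ht'
  have hNN : NI I t < NI I t' := by
    rcases Nat.lt_or_ge (NI I t) (NI I t') with h | h
    · exact h
    · exfalso
      have := Finset.card_le_card (VI_mono I h)
      omega
  have hN'pos : NI I t' ≠ 0 := by
    intro h0
    rw [h0, card_VI_zero] at hNcard'
    omega
  have hnew : I (NI I t') ∉ VI I (NI I t' - 1) := by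
    intro hmem
    have hsucc : NI I t' = (NI I t' - 1) + 1 := by omega
    have hVeq : VI I (NI I t') = VI I (NI I t' - 1) := by
      rw [hsucc, VI_succ, ← hsucc, Finset.insert_eq_self.2 hmem]
    have : NI I t' ≤ NI I t' - 1 := Nat.sInf_le (show (NI I t' - 1) ∈
      {j | (VI I j).card = t' + 1} by rw [Set.mem_setOf_eq, ← hVeq]; exact hNcard')
    omega
  intro heq
  apply hnew
  rw [σI, σI] at heq
  rw [← heq]
  exact VI_mono I (by omega) (mem_VI I le_rfl)

include hper hV hE in
lemma σI_inj : ∀ t t', t ≤ m → t' ≤ m → σI I t = σI I t' → t = t' := by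
  intro t t' ht ht' heq
  rcases Nat.lt_trichotomy t t' with h | h | h
  · exact absurd heq (σI_ne I m hper hV hE t t' h ht')
  · exact h
  · exact absurd heq.symm (σI_ne I m hper hV hE t' t h ht)


end main


end PartB

-- ===================== Part D : Dyck word bridging =====================
section Words

/-- boolean word of a Dyck word -/
def wOf (p : DyckWord) : ℕ → Bool := fun k => decide (p.toList.getD k D = U)

lemma wOf_cnt (p : DyckWord) : ∀ k ≤ p.toList.length,
    cnt (wOf p) k = (p.toList.take k).count U ∧
    dnt (wOf p) k = (p.toList.take k).count D := by
  intro k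
  induction k with
  | zero => intro _; simp [cnt, dnt]
  | succ k ih =>
    intro hk
    obtain ⟨ih1, ih2⟩ := ih (by omega)
    have hkl : k < p.toList.length := by omega
    have hget : p.toList.getD k D = p.toList[k] := List.getD_eq_getElem _ _ hkl
    have htake : p.toList.take (k+1) = p.toList.take k ++ [p.toList[k]] := by
      rw [List.take_succ, List.getElem?_eq_getElem hkl]
      rfl
    rcases (p.toList[k]).dichotomy with hU | hD
    · have hw : wOf p k = true := by
        show decide (p.toList.getD k D = U) = true
        rw [hget, hU]; simp
      constructor
      · simp [cnt, hw, htake, ih1, hU, List.count_append]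
      · simp [dnt, hw, htake, ih2, hU, List.count_append]
    · have hw : wOf p k = false := by
        show decide (p.toList.getD k D = U) = false
        rw [hget, hD]; simp
      constructor
      · simp [cnt, hw, htake, ih1, hD, List.count_append]
      · simp [dnt, hw, htake, ih2, hD, List.count_append]

lemma length_p {p : DyckWord} {m : ℕ} (hp : p.semilength = m) : p.toList.length = 2*m := by
  rw [← DyckWord.two_mul_semilength_eq_length, hp]

lemma count_UD (p : DyckWord) : p.toList.count U + p.toList.count D = p.toList.length := by
  have h1 : p.toList.count U = p.semilength := rfl
  have h2 : p.toList.count D = p.semilength := (DyckWord.semilength_eq_count_D).symm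
  have h3 := DyckWord.two_mul_semilength_eq_length (p := p)
  omega

lemma hd_p {p : DyckWord} {m : ℕ} (hp : p.semilength = m) :
    ∀ k ≤ 2*m, dnt (wOf p) k ≤ cnt (wOf p) k := by
  intro k hk
  obtain ⟨h1, h2⟩ := wOf_cnt p k (by rw [length_p hp]; omega)
  rw [h1, h2]
  exact p.count_D_le_count_U k

lemma hc_p {p : DyckWord} {m : ℕ} (hp : p.semilength = m) : cnt (wOf p) (2*m) = m := by
  obtain ⟨h1, -⟩ := wOf_cnt p (2*m) (by rw [length_p hp])
  rw [h1, ← length_p hp, List.take_length]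
  exact hp

lemma wOf_determines {p q : DyckWord} (hl : p.toList.length = q.toList.length)
    (h : ∀ k < p.toList.length, wOf p k = wOf q k) : p = q := by
  ext1
  apply List.ext_getElem hl
  intro k h1 h2
  have hw := h k h1
  simp only [wOf, List.getD_eq_getElem _ _ h1, List.getD_eq_getElem _ _ h2] at hw
  rcases (p.toList[k]).dichotomy with hU | hD <;>
    rcases (q.toList[k]).dichotomy with hU' | hD' <;> simp_all

lemma count_mapRange (w : ℕ → Bool) : ∀ j,
    ((List.range j).map (fun k => if w k then U else D)).count U = cnt w j ∧
    ((List.range j).map (fun k => if w k then U else D)).count D = dnt w j := by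
  intro j
  induction j with
  | zero => simp [cnt, dnt]
  | succ j ih =>
    rw [List.range_succ, List.map_append]
    by_cases hw : w j = true
    · constructor
      · simp [List.count_append, cnt, hw, ih.1]
      · simp [List.count_append, dnt, hw, ih.2]
    · have hw' : w j = false := by simpa using hw
      constructor
      · simp [List.count_append, cnt, hw', ih.1]
      · simp [List.count_append, dnt, hw', ih.2]

/-- build a Dyck word from a boolean word -/
def mkDyck (w : ℕ → Bool) (m : ℕ) (hd : ∀ k ≤ 2*m, dnt w k ≤ cnt w k)
    (hc : cnt w (2*m) = m) : DyckWord where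
  toList := (List.range (2*m)).map (fun k => if w k then U else D)
  count_U_eq_count_D := by
    rw [(count_mapRange w (2*m)).1, (count_mapRange w (2*m)).2]
    have := cnt_add_dnt w (2*m)
    omega
  count_D_le_count_U := by
    intro i
    rcases le_or_gt i (2*m) with hi | hi
    · have htake : ((List.range (2*m)).map (fun k => if w k then U else D)).take i =
          (List.range i).map (fun k => if w k then U else D) := by
        rw [← List.map_take, List.take_range]
        rw [inf_eq_left.2 hi]
      rw [htake, (count_mapRange w i).1, (count_mapRange w i).2]
      exact hd i hi
    · have htake : ((List.range (2*m)).map (fun k => if w k then U else D)).take i =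
          (List.range (2*m)).map (fun k => if w k then U else D) :=
        List.take_of_length_le (by simp only [List.length_map, List.length_range]; omega)
      rw [htake, (count_mapRange w (2*m)).1, (count_mapRange w (2*m)).2]
      have := cnt_add_dnt w (2*m)
      omega

lemma mkDyck_semilength (w : ℕ → Bool) (m : ℕ) (hd) (hc) :
    (mkDyck w m hd hc).semilength = m := by
  have : (mkDyck w m hd hc).semilength =
      ((List.range (2*m)).map (fun k => if w k then U else D)).count U := rfl
  rw [this, (count_mapRange w (2*m)).1, hc]

lemma wOf_mkDyck (w : ℕ → Bool) (m : ℕ) (hd) (hc) :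
    ∀ k < 2*m, wOf (mkDyck w m hd hc) k = w k := by
  intro k hk
  have hlen : k < ((List.range (2*m)).map (fun k => if w k then U else D)).length := by
    simp [hk]
  have hget : (mkDyck w m hd hc).toList.getD k D = (if w k then U else D) := by
    show ((List.range (2*m)).map (fun k => if w k then U else D)).getD k D = _
    rw [List.getD_eq_getElem _ _ hlen, List.getElem_map, List.getElem_range]
  rw [wOf, hget]
  by_cases hw : w k = true <;> simp_all

end Words

lemma sInf_congr_below {A B : Set ℕ} {M : ℕ} (h : ∀ x ≤ M, (x ∈ A ↔ x ∈ B))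
    (hA : ∃ x ∈ A, x ≤ M) : sInf A = sInf B := by
  obtain ⟨x, hxA, hxM⟩ := hA
  have hAne : A.Nonempty := ⟨x, hxA⟩
  have h1 : sInf A ≤ M := le_trans (Nat.sInf_le hxA) hxM
  have h2 : sInf A ∈ B := (h _ h1).1 (Nat.sInf_mem hAne)
  have h3 : sInf B ≤ sInf A := Nat.sInf_le h2
  have h4 : sInf B ∈ A := (h _ (le_trans h3 h1)).2 (Nat.sInf_mem ⟨_, h2⟩)
  exact le_antisymm (Nat.sInf_le h4) h3

lemma St_congr2 {α : Type*} (w w' : ℕ → Bool) (σ σ' : ℕ → α) (m : ℕ)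
    (hc : cnt w' (2*m) = m) :
    ∀ k ≤ 2*m, (∀ j < k, w j = w' j) → (∀ t ≤ m, σ t = σ' t) →
      St w σ k = St w' σ' k := by
  intro k
  induction k with
  | zero =>
    intro _ _ hσ
    show [σ 0] = [σ' 0]
    rw [hσ 0 (by omega)]
  | succ k ih =>
    intro hk hw hσ
    have ihk := ih (by omega) (fun j hj => hw j (by omega)) hσ
    have hwk := hw k (by omega)
    by_cases h : w k = true
    · have h' : w' k = true := by rw [← hwk]; exact h
      have hcnt : cnt w k = cnt w' k := cnt_congr k (fun j hj => hw j (by omega))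
      have hidx : cnt w' k + 1 ≤ m := by
        have h1 : cnt w' (k+1) = cnt w' k + 1 := by simp [cnt, h']
        have h2 := cnt_mono w' (show k+1 ≤ 2*m from hk)
        omega
      show (if w k then _ :: _ else _) = (if w' k then _ :: _ else _)
      rw [if_pos h, if_pos h', ihk, hcnt, hσ _ hidx]
    · have hf : w k = false := by simpa using h
      have hf' : w' k = false := by rw [← hwk]; exact hf
      show (if w k then _ :: _ else _) = (if w' k then _ :: _ else _)
      rw [if_neg (by simp [hf]), if_neg (by simp [hf']), ihk]

-- ===================== Part E : assembly =====================
section Assembly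

variable (m n : ℕ) [NeZero (2*m)]

/-- clamp an embedding to an ℕ-indexed family -/
def sigC (σ : Fin (m+1) ↪ Fin n) : ℕ → Fin n := fun t => σ ⟨min t m, by omega⟩

lemma sigC_le {σ : Fin (m+1) ↪ Fin n} {t : ℕ} (ht : t ≤ m) :
    sigC m n σ t = σ ⟨t, by omega⟩ := by
  simp [sigC, min_eq_left ht]

lemma sigC_inj (σ : Fin (m+1) ↪ Fin n) :
    ∀ t t', t ≤ m → t' ≤ m → sigC m n σ t = sigC m n σ t' → t = t' := by
  intro t t' ht ht' h
  rw [sigC_le m n ht, sigC_le m n ht'] at h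
  have := σ.injective h
  rw [Fin.mk.injEq] at this
  exact this

lemma image_univ_eq {β : Type*} [DecidableEq β] (f : ZMod (2*m) → β) :
    Finset.univ.image f = (Finset.range (2*m)).image (fun k : ℕ => f (k : ZMod (2*m))) := by
  ext b
  simp only [Finset.mem_image, Finset.mem_univ, true_and, Finset.mem_range]
  constructor
  · rintro ⟨j, rfl⟩
    exact ⟨j.val, ZMod.val_lt j, by rw [ZMod.natCast_rightInverse j]⟩
  · rintro ⟨k, hk, rfl⟩
    exact ⟨(k : ZMod (2*m)), rfl⟩

variable (hm : 1 ≤ m)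

lemma val_add_one (k : ℕ) (hk : k < 2*m) (j : ZMod (2*m)) (hj : j = (k : ZMod (2*m))) :
    (j + 1) = ((k+1 : ℕ) : ZMod (2*m)) := by
  rw [hj]; push_cast; ring

section WalkSpec

variable (p : DyckWord) (hp : p.semilength = m) (σ : Fin (m+1) ↪ Fin n)

include hm hp

lemma walk_image :
    Finset.univ.image (fun j : ZMod (2*m) => Jw (wOf p) (sigC m n σ) j.val) =
      Vw (wOf p) (sigC m n σ) (2*m - 1) := by
  rw [image_univ_eq]
  have h1 : ∀ k ∈ Finset.range (2*m),
      Jw (wOf p) (sigC m n σ) ((k : ZMod (2*m)).val) = Jw (wOf p) (sigC m n σ) k := by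
    intro k hk
    rw [ZMod.val_natCast_of_lt (Finset.mem_range.1 hk)]
  rw [Finset.image_congr h1]
  have h2m : 2*m = (2*m-1)+1 := by omega
  rw [Vw, ← h2m]

lemma walk_cond1 :
    (Finset.univ.image (fun j : ZMod (2*m) => Jw (wOf p) (sigC m n σ) j.val)).card = m + 1 := by
  have hd := hd_p hp
  have hc := hc_p hp
  have hσ := sigC_inj m n σ
  rw [walk_image m n hm p hp σ, ← Vw_last (wOf p) (sigC m n σ) m hd hc hσ hm,
    Vw_card (wOf p) (sigC m n σ) m hd hc hσ (2*m) le_rfl, hc]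

lemma walk_edge_eq (k : ℕ) (hk : k < 2*m) :
    (fun j : ZMod (2*m) => s(Jw (wOf p) (sigC m n σ) j.val,
        Jw (wOf p) (sigC m n σ) (j+1).val)) ((k : ZMod (2*m))) =
      s(Jw (wOf p) (sigC m n σ) k, Jw (wOf p) (sigC m n σ) (k+1)) := by
  have hd := hd_p hp
  have hc := hc_p hp
  have hσ := sigC_inj m n σ
  simp only []
  rw [ZMod.val_natCast_of_lt hk, val_add_one m k hk _ rfl]
  rcases lt_or_ge (k+1) (2*m) with h | h
  · rw [ZMod.val_natCast_of_lt h]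
  · have hk1 : k + 1 = 2*m := by omega
    have : ((k+1 : ℕ) : ZMod (2*m)) = 0 := by rw [hk1]; exact ZMod.natCast_self _
    rw [this, ZMod.val_zero, hk1]
    rw [Jw_final (wOf p) (sigC m n σ) m hd hc hσ]
    rfl

lemma walk_cond2 :
    (Finset.univ.image (fun j : ZMod (2*m) =>
      s(Jw (wOf p) (sigC m n σ) j.val, Jw (wOf p) (sigC m n σ) (j+1).val))).card = m := by
  have hd := hd_p hp
  have hc := hc_p hp
  have hσ := sigC_inj m n σ
  rw [image_univ_eq]
  have h1 : ∀ k ∈ Finset.range (2*m),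
      (fun kk : ℕ => (fun j : ZMod (2*m) => s(Jw (wOf p) (sigC m n σ) j.val,
        Jw (wOf p) (sigC m n σ) (j+1).val)) ((kk : ZMod (2*m)))) k =
      (fun kk : ℕ => s(Jw (wOf p) (sigC m n σ) kk, Jw (wOf p) (sigC m n σ) (kk+1))) k := by
    intro k hk
    exact walk_edge_eq m n hm p hp σ k (Finset.mem_range.1 hk)
  rw [Finset.image_congr h1]
  exact Ew_card_final (wOf p) (sigC m n σ) m hd hc hσ

end WalkSpec

/-- the bijection : (Dyck word, labels) ↦ walk -/
noncomputable def Fmap (x : {p : DyckWord // p.semilength = m} × (Fin (m+1) ↪ Fin n)) :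
    {i : ZMod (2*m) → Fin n //
      (Finset.univ.image i).card = m + 1 ∧
      (Finset.univ.image (fun j => s(i j, i (j + 1)))).card = m} :=
  ⟨fun j => Jw (wOf x.1.1) (sigC m n x.2) j.val,
    walk_cond1 m n hm x.1.1 x.1.2 x.2, walk_cond2 m n hm x.1.1 x.1.2 x.2⟩

lemma Fmap_inj : Function.Injective (Fmap m n hm) := by
  rintro ⟨⟨p, hp⟩, σ⟩ ⟨⟨q, hq⟩, τ⟩ h
  have hfun : ∀ j : ZMod (2*m),
      Jw (wOf p) (sigC m n σ) j.val = Jw (wOf q) (sigC m n τ) j.val :=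
    fun j => congrFun (congrArg Subtype.val h) j
  have hdp := hd_p hp
  have hcp := hc_p hp
  have hσp := sigC_inj m n σ
  have hdq := hd_p hq
  have hcq := hc_p hq
  have hσq := sigC_inj m n τ
  have hJ : ∀ k ≤ 2*m, Jw (wOf p) (sigC m n σ) k = Jw (wOf q) (sigC m n τ) k := by
    intro k hk
    rcases lt_or_ge k (2*m) with h1 | h1
    · have := hfun (k : ZMod (2*m))
      rwa [ZMod.val_natCast_of_lt h1] at this
    · have hk2 : k = 2*m := by omega
      subst hk2
      rw [Jw_final (wOf p) _ m hdp hcp hσp, Jw_final (wOf q) _ m hdq hcq hσq]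
      have h0 := hfun (0 : ZMod (2*m))
      rw [ZMod.val_zero] at h0
      exact h0
  have hVw : ∀ k, k < 2*m → Vw (wOf p) (sigC m n σ) k = Vw (wOf q) (sigC m n τ) k := by
    intro k hk
    unfold Vw
    apply Finset.image_congr
    intro j hj
    simp only [Finset.coe_range, Set.mem_Iio] at hj
    exact hJ j (by omega)
  have hw : ∀ k < 2*m, wOf p k = wOf q k := by
    intro k hk
    have h1 := w_recover (wOf p) (sigC m n σ) m hdp hcp hσp k hk
    have h2 := w_recover (wOf q) (sigC m n τ) m hdq hcq hσq k hk
    rw [hVw k hk, hJ (k+1) (by omega)] at h1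
    have h3 := h1.trans h2.symm
    cases hb : wOf p k <;> cases hb' : wOf q k <;> simp_all
  have hpq : p = q := by
    apply wOf_determines (by rw [length_p hp, length_p hq])
    intro k hk
    rw [length_p hp] at hk
    exact hw k hk
  have hστ : σ = τ := by
    apply DFunLike.ext
    intro t
    have ht : (t : ℕ) ≤ m := Fin.is_le t
    have hA := sigma_recover (wOf p) (sigC m n σ) m hdp hcp hσp t.val ht
    have hB := sigma_recover (wOf q) (sigC m n τ) m hdq hcq hσq t.val ht
    have hsetEq : sInf {k | (Vw (wOf p) (sigC m n σ) k).card = t.val+1} =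
        sInf {k | (Vw (wOf q) (sigC m n τ) k).card = t.val+1} := by
      apply sInf_congr_below (M := 2*m-1)
      · intro x hx
        rw [Set.mem_setOf_eq, Set.mem_setOf_eq, hVw x (by omega)]
      · exact Vw_wit (wOf p) (sigC m n σ) m hdp hcp hσp hm t.val ht
    obtain ⟨x0, hx0, hx0M⟩ := Vw_wit (wOf p) (sigC m n σ) m hdp hcp hσp hm t.val ht
    have hNle : sInf {k | (Vw (wOf p) (sigC m n σ) k).card = t.val+1} ≤ 2*m-1 :=
      le_trans (Nat.sInf_le hx0) hx0M
    have hkey : sigC m n σ t.val = sigC m n τ t.val := by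
      rw [← hA, ← hB, hsetEq]
      exact hJ _ (by omega)
    rw [sigC_le m n ht, sigC_le m n ht] at hkey
    simpa [Fin.eta] using hkey
  subst hpq
  subst hστ
  rfl

lemma Fmap_surj : Function.Surjective (Fmap m n hm) := by
  rintro ⟨i, h1, h2⟩
  set I : ℕ → Fin n := fun k => i ((k : ℕ) : ZMod (2*m)) with hIdef
  have hper : I (2*m) = I 0 := by
    show i _ = i _
    norm_num [ZMod.natCast_self]
  have hIV : VI I (2*m) = Finset.univ.image i := by
    rw [image_univ_eq m i, ← hIdef, VI, Finset.range_add_one, Finset.image_insert]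
    rw [show I (2*m) = I 0 from hper]
    exact Finset.insert_eq_self.2
      (Finset.mem_image_of_mem _ (Finset.mem_range.2 (by omega)))
  have hV' : (VI I (2*m)).card = m+1 := by rw [hIV]; exact h1
  have hEi : EI I (2*m) = Finset.univ.image (fun j => s(i j, i (j+1))) := by
    rw [image_univ_eq m (fun j : ZMod (2*m) => s(i j, i (j+1))), EI]
    apply Finset.image_congr
    intro k hk
    simp only [Finset.coe_range, Set.mem_Iio] at hk
    show s(I k, I (k+1)) = s(i (k : ZMod (2*m)), i ((k : ZMod (2*m)) + 1))
    have hcast : ((k+1 : ℕ) : ZMod (2*m)) = (k : ZMod (2*m)) + 1 := by push_cast; ring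
    rw [hIdef]
    simp only []
    rw [hcast]
  have hE' : (EI I (2*m)).card = m := by rw [hEi]; exact h2
  have hinj : Function.Injective (fun t : Fin (m+1) => σI I t.val) := by
    intro a b hab
    exact Fin.ext (σI_inj I m hper hV' hE' a.val b.val (Fin.is_le a) (Fin.is_le b) hab)
  refine ⟨⟨⟨mkDyck (wI I) m (hd_wI I m hper hV' hE') (hc_wI I m hper hV' hE'),
    mkDyck_semilength _ _ _ _⟩, ⟨fun t => σI I t.val, hinj⟩⟩, ?_⟩
  apply Subtype.ext
  funext j
  show Jw (wOf (mkDyck (wI I) m (hd_wI I m hper hV' hE') (hc_wI I m hper hV' hE')))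
      (sigC m n ⟨fun t => σI I t.val, hinj⟩) j.val = i j
  have hjval : j.val ≤ 2*m := le_of_lt (ZMod.val_lt j)
  have hst : St (wOf (mkDyck (wI I) m (hd_wI I m hper hV' hE') (hc_wI I m hper hV' hE')))
      (sigC m n ⟨fun t => σI I t.val, hinj⟩) j.val = St (wI I) (σI I) j.val := by
    apply St_congr2 _ _ _ _ m (hc_wI I m hper hV' hE') j.val hjval
    · intro k hk
      exact wOf_mkDyck (wI I) m _ _ k (by omega)
    · intro t ht
      rw [sigC_le m n ht]
      rfl
  rw [Jw, hst, (fwd_inv I m hper hV' hE' j.val hjval).1, head_anc]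
  show i _ = i j
  rw [ZMod.natCast_rightInverse j]

end Assembly
end Stmt16

/-- For `m ≥ 1` and `n ≥ 1`, the number of closed walks `i : ℤ/(2m) → {1,…,n}` whose
directed multigraph is of double tree type (range of cardinality `m+1`, and exactly `m`
distinct unordered pairs `{i(j), i(j+1)}`) equals `n(n−1)⋯(n−m) · C_m`, where `C_m` is the
`m`-th Catalan number. -/
theorem stmt_16 (m n : ℕ) (hm : 1 ≤ m) (hn : 1 ≤ n) :
    letI : NeZero (2 * m) := ⟨by omega⟩
    Nat.card {i : ZMod (2 * m) → Fin n //
        (Finset.univ.image i).card = m + 1 ∧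
        (Finset.univ.image (fun j : ZMod (2 * m) => s(i j, i (j + 1)))).card = m}
      = (∏ j ∈ Finset.range (m + 1), (n - j)) * catalan m := by
  letI : NeZero (2 * m) := ⟨by omega⟩
  have hbij : Function.Bijective (Stmt16.Fmap m n hm) :=
    ⟨Stmt16.Fmap_inj m n hm, Stmt16.Fmap_surj m n hm⟩
  have hcard := Nat.card_eq_of_bijective _ hbij
  rw [← hcard, Nat.card_eq_fintype_card, Fintype.card_prod,
    DyckWord.card_dyckWord_semilength_eq_catalan, Fintype.card_embedding_eq,
    Fintype.card_fin, Fintype.card_fin, Nat.descFactorial_eq_prod_range, mul_comm]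
end
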